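/- arXiv:2605.00614 — 5 statements merged into one kernel-verified Lean document; each statement's English description precedes it below -/
import Mathlib

section
/- Suppose Y = Σ_{k=1}^K β⁰_k X_k + λ⁰ f⁰' + e, where λ⁰ is a fixed N×R⁰ matrix, f⁰ is a fixed T×R⁰ matrix, β⁰ ∈ ℝ^K is fixed, and X_1,…,X_K and e are random N×T matrices on a probability space such that: (i) every entry X_{k,it} and e_{it} is square-integrable; (ii) E[e_{it}] = 0 and E[X_{k,it} e_{it}] = 0 for all k, i, t; (iii) for every T×R matrix F and every nonzero α ∈ ℝ^K one has Σ_{k,l} α_k α_l E[Tr(X_k' M_{λ⁰} X_l M_F)] > 0; and (iv) R ≥ rank(λ⁰ f⁰'). Define Q(β, Λ, F) = E ‖Y − Σ_k β_k X_k − Λ F'‖²_HS for β ∈ ℝ^K, Λ ∈ ℝ^{N×R}, F ∈ ℝ^{T×R}. Then Q(β, Λ, F) ≥ E ‖e‖²_HS for all (β, Λ, F), with equality if and only if β = β⁰ and Λ F' = λ⁰ f⁰'; in particular β⁰ and the product λ⁰ f⁰' (and hence R⁰ = rank(λ⁰ f⁰')) are identified as the unique minimizers of Q. -/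
open Matrix MeasureTheory
open scoped BigOperators

/-- Squared Frobenius (Hilbert–Schmidt) norm of a real matrix. -/
noncomputable def frobSq {n m : ℕ} (A : Matrix (Fin n) (Fin m) ℝ) : ℝ :=
  Matrix.trace (A * Aᵀ)

/-- Operator (spectral) norm of a real matrix. -/
noncomputable def opNorm {n m : ℕ} (A : Matrix (Fin n) (Fin m) ℝ) : ℝ :=
  ‖LinearMap.toContinuousLinearMap (Matrix.toEuclideanLin A)‖

/-- Orthogonal projection matrix onto the column space of `A`. -/
noncomputable def projMat {n m : ℕ} (A : Matrix (Fin n) (Fin m) ℝ) : Matrix (Fin n) (Fin n) ℝ :=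
  Matrix.toEuclideanLin.symm
    (((LinearMap.range (Matrix.toEuclideanLin A)).subtypeL.comp
      (Submodule.orthogonalProjection (LinearMap.range (Matrix.toEuclideanLin A))) :
        EuclideanSpace ℝ (Fin n) →L[ℝ] EuclideanSpace ℝ (Fin n)) :
        EuclideanSpace ℝ (Fin n) →ₗ[ℝ] EuclideanSpace ℝ (Fin n))

/-- Annihilator `M_A = I - P_A`. -/
noncomputable def annMat {n m : ℕ} (A : Matrix (Fin n) (Fin m) ℝ) : Matrix (Fin n) (Fin n) ℝ :=
  1 - projMat A

/-- `mu S r` is the `r`-th largest eigenvalue (1-based, with multiplicity) of the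
symmetric matrix `S`; it is `0` if `S` is not symmetric or `r ∉ {1,…,n}`. -/
noncomputable def mu {n : ℕ} (S : Matrix (Fin n) (Fin n) ℝ) (r : ℕ) : ℝ :=
  if h : S.IsHermitian ∧ 1 ≤ r ∧ r ≤ n then
    (h.1.eigenvalues ∘ Tuple.sort h.1.eigenvalues)
      (Fin.rev ⟨r - 1, by obtain ⟨-, h1, h2⟩ := h; omega⟩)
  else 0

/-! ### Auxiliary matrix lemmas -/

lemma trace_mul_transpose_eq_sum {n m : ℕ} (A B : Matrix (Fin n) (Fin m) ℝ) :
    Matrix.trace (A * Bᵀ) = ∑ i, ∑ j, A i j * B i j := by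
  simp [Matrix.trace, Matrix.mul_apply, Matrix.diag]

lemma frobSq_eq_sum {n m : ℕ} (A : Matrix (Fin n) (Fin m) ℝ) :
    frobSq A = ∑ i, ∑ j, (A i j)^2 := by
  simp [frobSq, trace_mul_transpose_eq_sum, sq]

lemma frobSq_nonneg {n m : ℕ} (A : Matrix (Fin n) (Fin m) ℝ) : 0 ≤ frobSq A := by
  rw [frobSq_eq_sum]; positivity

lemma frobSq_eq_zero_iff {n m : ℕ} (A : Matrix (Fin n) (Fin m) ℝ) : frobSq A = 0 ↔ A = 0 := by
  constructor
  · intro h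
    ext i j
    rw [frobSq_eq_sum] at h
    have h1 := (Finset.sum_eq_zero_iff_of_nonneg (fun i _ => by positivity)).mp h i (by simp)
    have h2 := (Finset.sum_eq_zero_iff_of_nonneg (fun j _ => sq_nonneg _)).mp h1 j (by simp)
    simpa using pow_eq_zero_iff (n := 2) (by norm_num) |>.mp h2
  · rintro rfl; simp [frobSq]

lemma frobSq_transpose {n m : ℕ} (A : Matrix (Fin n) (Fin m) ℝ) : frobSq Aᵀ = frobSq A := by
  unfold frobSq
  rw [Matrix.transpose_transpose, Matrix.trace_mul_comm]

lemma toEuclideanLin_mul {n m p : ℕ} (A : Matrix (Fin n) (Fin m) ℝ) (B : Matrix (Fin m) (Fin p) ℝ) :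
    Matrix.toEuclideanLin (A * B) = (Matrix.toEuclideanLin A).comp (Matrix.toEuclideanLin B) := by
  simp only [Matrix.toEuclideanLin_eq_toLin]
  rw [Matrix.toLin_mul (PiLp.basisFun 2 ℝ (Fin p)) (PiLp.basisFun 2 ℝ (Fin m))
    (PiLp.basisFun 2 ℝ (Fin n))]

lemma toEuclideanLin_projMat {n m : ℕ} (A : Matrix (Fin n) (Fin m) ℝ) :
    Matrix.toEuclideanLin (projMat A) =
      (((LinearMap.range (Matrix.toEuclideanLin A)).subtypeL.comp
        (Submodule.orthogonalProjection (LinearMap.range (Matrix.toEuclideanLin A))) :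
          EuclideanSpace ℝ (Fin n) →L[ℝ] EuclideanSpace ℝ (Fin n)) :
          EuclideanSpace ℝ (Fin n) →ₗ[ℝ] EuclideanSpace ℝ (Fin n)) := by
  simp [projMat]

lemma projMat_idem {n m : ℕ} (A : Matrix (Fin n) (Fin m) ℝ) :
    projMat A * projMat A = projMat A := by
  apply Matrix.toEuclideanLin.injective
  rw [toEuclideanLin_mul, toEuclideanLin_projMat]
  ext x
  simp only [LinearMap.comp_apply, ContinuousLinearMap.coe_coe, ContinuousLinearMap.comp_apply,
    Submodule.subtypeL_apply]
  rw [Submodule.orthogonalProjection_mem_subspace_eq_self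
    (⟨_, (Submodule.orthogonalProjection _ x).2⟩ : LinearMap.range (Matrix.toEuclideanLin A))]

lemma projMat_mul_self {n m : ℕ} (A : Matrix (Fin n) (Fin m) ℝ) :
    projMat A * A = A := by
  apply Matrix.toEuclideanLin.injective
  rw [toEuclideanLin_mul, toEuclideanLin_projMat]
  ext x
  simp only [LinearMap.comp_apply, ContinuousLinearMap.coe_coe, ContinuousLinearMap.comp_apply,
    Submodule.subtypeL_apply]
  rw [Submodule.orthogonalProjection_mem_subspace_eq_self
    (⟨_, LinearMap.mem_range_self _ x⟩ : LinearMap.range (Matrix.toEuclideanLin A))]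

lemma projMat_transpose {n m : ℕ} (A : Matrix (Fin n) (Fin m) ℝ) :
    (projMat A)ᵀ = projMat A := by
  apply Matrix.toEuclideanLin.injective
  set U := LinearMap.range (Matrix.toEuclideanLin A)
  set p : EuclideanSpace ℝ (Fin n) →L[ℝ] EuclideanSpace ℝ (Fin n) :=
    U.subtypeL.comp (Submodule.orthogonalProjection U) with hp
  rw [← Matrix.conjTranspose_eq_transpose_of_trivial,
    Matrix.toEuclideanLin_conjTranspose_eq_adjoint, toEuclideanLin_projMat,
    LinearMap.adjoint_eq_toCLM_adjoint]
  have h2 : LinearMap.toContinuousLinearMap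
      ((p : EuclideanSpace ℝ (Fin n) →ₗ[ℝ] EuclideanSpace ℝ (Fin n))) = p := by
    ext x; simp
  rw [← hp, h2]
  have hsa : IsSelfAdjoint p := isSelfAdjoint_starProjection U
  rw [← ContinuousLinearMap.star_eq_adjoint, hsa]

lemma annMat_transpose {n m : ℕ} (A : Matrix (Fin n) (Fin m) ℝ) : (annMat A)ᵀ = annMat A := by
  simp [annMat, Matrix.transpose_sub, projMat_transpose]

lemma annMat_idem {n m : ℕ} (A : Matrix (Fin n) (Fin m) ℝ) : annMat A * annMat A = annMat A := by
  simp only [annMat, Matrix.sub_mul, Matrix.mul_sub, Matrix.one_mul, Matrix.mul_one,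
    projMat_idem]
  abel

lemma annMat_mul_self {n m : ℕ} (A : Matrix (Fin n) (Fin m) ℝ) : annMat A * A = 0 := by
  simp [annMat, Matrix.sub_mul, projMat_mul_self]

lemma frobSq_sym_idem {n m : ℕ} (Q : Matrix (Fin n) (Fin n) ℝ)
    (hQs : Qᵀ = Q) (hQi : Q * Q = Q) (A : Matrix (Fin n) (Fin m) ℝ) :
    frobSq (Q * A) = Matrix.trace (Q * (A * Aᵀ)) := by
  unfold frobSq
  calc Matrix.trace (Q*A*(Q*A)ᵀ) = Matrix.trace ((Q*A*Aᵀ)*Q) := by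
        rw [Matrix.transpose_mul, hQs, ← Matrix.mul_assoc]
    _ = Matrix.trace (Q*(Q*A*Aᵀ)) := Matrix.trace_mul_comm _ _
    _ = Matrix.trace (Q*(A*Aᵀ)) := by
        rw [← Matrix.mul_assoc, ← Matrix.mul_assoc, hQi, Matrix.mul_assoc]

/-- For symmetric idempotent `P`, left multiplication contracts the Frobenius norm. -/
lemma frobSq_mul_left_le {n m : ℕ} (P : Matrix (Fin n) (Fin n) ℝ)
    (hs : Pᵀ = P) (hi : P * P = P) (A : Matrix (Fin n) (Fin m) ℝ) :
    frobSq (P * A) ≤ frobSq A := by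
  have hs' : (1 - P)ᵀ = 1 - P := by rw [Matrix.transpose_sub, Matrix.transpose_one, hs]
  have hi' : (1 - P) * (1 - P) = 1 - P := by
    simp only [Matrix.sub_mul, Matrix.mul_sub, Matrix.one_mul, Matrix.mul_one, hi]
    abel
  have h1 := frobSq_sym_idem P hs hi A
  have h2 := frobSq_sym_idem (1 - P) hs' hi' A
  have h3 : frobSq A - frobSq (P * A) = frobSq ((1 - P) * A) := by
    rw [h1, h2, Matrix.sub_mul, Matrix.trace_sub, Matrix.one_mul]
    rfl
  have := frobSq_nonneg ((1 - P) * A)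
  linarith

lemma frobSq_mul_right_le {n m : ℕ} (Q : Matrix (Fin m) (Fin m) ℝ)
    (hs : Qᵀ = Q) (hi : Q * Q = Q) (A : Matrix (Fin n) (Fin m) ℝ) :
    frobSq (A * Q) ≤ frobSq A := by
  calc frobSq (A * Q) = frobSq ((A * Q)ᵀ) := (frobSq_transpose _).symm
    _ = frobSq (Q * Aᵀ) := by rw [Matrix.transpose_mul, hs]
    _ ≤ frobSq Aᵀ := frobSq_mul_left_le Q hs hi Aᵀ
    _ = frobSq A := frobSq_transpose A

/-- The key trace identity for sandwiched matrices. -/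
lemma trace_sandwich {n t : ℕ} (P : Matrix (Fin n) (Fin n) ℝ) (Q : Matrix (Fin t) (Fin t) ℝ)
    (hPs : Pᵀ = P) (hPi : P * P = P) (hQs : Qᵀ = Q) (hQi : Q * Q = Q)
    (X Y : Matrix (Fin n) (Fin t) ℝ) :
    Matrix.trace ((P * X * Q) * (P * Y * Q)ᵀ) = Matrix.trace (Yᵀ * P * X * Q) := by
  have h1 : (P * Y * Q)ᵀ = Q * Yᵀ * P := by
    rw [Matrix.transpose_mul, Matrix.transpose_mul, hPs, hQs, Matrix.mul_assoc]
  rw [h1]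
  calc Matrix.trace (P * X * Q * (Q * Yᵀ * P))
      = Matrix.trace ((P * X * Q * (Q * Yᵀ)) * P) := by simp only [Matrix.mul_assoc]
    _ = Matrix.trace (P * (P * X * Q * (Q * Yᵀ))) := Matrix.trace_mul_comm _ _
    _ = Matrix.trace ((P * X * Q) * Yᵀ) := by
        rw [show P * (P * X * Q * (Q * Yᵀ)) = (P * P) * X * ((Q * Q) * Yᵀ) by
          simp only [Matrix.mul_assoc], hPi, hQi, ← Matrix.mul_assoc]
    _ = Matrix.trace (Yᵀ * (P * X * Q)) := Matrix.trace_mul_comm _ _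
    _ = Matrix.trace (Yᵀ * P * X * Q) := by simp only [Matrix.mul_assoc]

/-! ### Auxiliary integrability lemmas -/

section Prob

variable {Ω : Type*} [MeasurableSpace Ω] {μ : Measure Ω} [IsProbabilityMeasure μ]

lemma memLp2_integrable_mul {f g : Ω → ℝ} (hf : MemLp f 2 μ) (hg : MemLp g 2 μ) :
    Integrable (fun ω => f ω * g ω) μ := by
  have h : MemLp (f • g) 1 μ := hg.smul hf
  exact h.integrable le_rfl

lemma memLp_entry_sums {K : ℕ} (c : Fin K → ℝ) (g : Fin K → Ω → ℝ) (d : ℝ)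
    (hg : ∀ k, MemLp (g k) 2 μ) :
    MemLp (fun ω => (∑ k, c k * g k ω) + d) 2 μ := by
  have h := (memLp_finset_sum' (μ := μ) (p := 2) Finset.univ
    (fun k (_ : k ∈ Finset.univ) => (hg k).const_mul (c k))).add (memLp_const d)
  convert h using 1
  funext ω
  simp

lemma memLp_sandwich {n m p q : ℕ} (C : Matrix (Fin n) (Fin m) ℝ)
    (Wf : Ω → Matrix (Fin m) (Fin p) ℝ) (E : Matrix (Fin p) (Fin q) ℝ)
    (hW : ∀ a b, MemLp (fun ω => Wf ω a b) 2 μ) (i : Fin n) (j : Fin q) :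
    MemLp (fun ω => (C * Wf ω * E) i j) 2 μ := by
  have hr : (fun ω => (C * Wf ω * E) i j)
      = fun ω => ∑ b, E b j * (∑ a, C i a * Wf ω a b) := by
    funext ω; simp [Matrix.mul_apply]
    exact Finset.sum_congr rfl fun b _ => by ring
  rw [hr]
  have hin : ∀ b, MemLp (fun ω => E b j * ∑ a, C i a * Wf ω a b) 2 μ := by
    intro b
    have h0 := memLp_finset_sum' (μ := μ) (p := 2) Finset.univ
      (fun a (_ : a ∈ Finset.univ) => (hW a b).const_mul (C i a))
    have h1 : MemLp (fun ω => ∑ a, C i a * Wf ω a b) 2 μ := by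
      convert h0 using 1
      funext ω
      simp
    exact h1.const_mul (E b j)
  have h := memLp_finset_sum' (μ := μ) (p := 2) Finset.univ
    (fun b (_ : b ∈ Finset.univ) => hin b)
  convert h using 1
  funext ω
  simp

lemma integrable_frobSq {n m : ℕ} {A : Ω → Matrix (Fin n) (Fin m) ℝ}
    (hA : ∀ i j, MemLp (fun ω => A ω i j) 2 μ) :
    Integrable (fun ω => frobSq (A ω)) μ := by
  simp only [frobSq_eq_sum]
  apply integrable_finset_sum
  intro i _
  apply integrable_finset_sum
  intro j _
  exact (hA i j).integrable_sq

end Prob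

/-- Identification, Theorem 1 of the paper. Under the interactive
fixed effects model Y = Σ_k β⁰_k X_k + λ⁰f⁰' + e with (i) square-integrable entries,
(ii) E[e_{it}] = 0 and E[X_{k,it} e_{it}] = 0, (iii) the non-collinearity condition,
and (iv) R ≥ rank(λ⁰f⁰'), the population objective
Q(β,Λ,F) = E‖Y − Σ_k β_k X_k − ΛF'‖²_HS satisfies Q(β,Λ,F) ≥ E‖e‖²_HS with equality
iff β = β⁰ and ΛF' = λ⁰f⁰'; hence β⁰, λ⁰f⁰' (and R⁰ = rank(λ⁰f⁰')) are identified. -/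
theorem statement0 {N T K R R0 : ℕ}
    {Ω : Type*} [MeasurableSpace Ω] (μ : MeasureTheory.Measure Ω)
    [MeasureTheory.IsProbabilityMeasure μ]
    (lam0 : Matrix (Fin N) (Fin R0) ℝ) (f0 : Matrix (Fin T) (Fin R0) ℝ)
    (β0 : Fin K → ℝ)
    (X : Fin K → Ω → Matrix (Fin N) (Fin T) ℝ)
    (e : Ω → Matrix (Fin N) (Fin T) ℝ)
    (Y : Ω → Matrix (Fin N) (Fin T) ℝ)
    (hY : ∀ ω, Y ω = (∑ k, β0 k • X k ω) + lam0 * f0ᵀ + e ω)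
    (hX2 : ∀ k i t, MeasureTheory.MemLp (fun ω => X k ω i t) 2 μ)
    (he2 : ∀ i t, MeasureTheory.MemLp (fun ω => e ω i t) 2 μ)
    (hmean : ∀ i t, ∫ ω, e ω i t ∂μ = 0)
    (hexo : ∀ k i t, ∫ ω, X k ω i t * e ω i t ∂μ = 0)
    (hNC : ∀ (F : Matrix (Fin T) (Fin R) ℝ) (α : Fin K → ℝ), α ≠ 0 →
      0 < ∑ k, ∑ l, α k * α l *
        ∫ ω, Matrix.trace ((X k ω)ᵀ * annMat lam0 * X l ω * annMat F) ∂μ)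
    (hrank : (lam0 * f0ᵀ).rank ≤ R) :
    ∀ (β : Fin K → ℝ) (Λ : Matrix (Fin N) (Fin R) ℝ) (F : Matrix (Fin T) (Fin R) ℝ),
      (∫ ω, frobSq (e ω) ∂μ) ≤ (∫ ω, frobSq (Y ω - (∑ k, β k • X k ω) - Λ * Fᵀ) ∂μ) ∧
      ((∫ ω, frobSq (Y ω - (∑ k, β k • X k ω) - Λ * Fᵀ) ∂μ) = (∫ ω, frobSq (e ω) ∂μ) ↔
        (β = β0 ∧ Λ * Fᵀ = lam0 * f0ᵀ)) := by
  intro β Λ F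
  set δ : Fin K → ℝ := fun k => β0 k - β k with hδdef
  set D : Matrix (Fin N) (Fin T) ℝ := lam0 * f0ᵀ - Λ * Fᵀ with hDdef
  set W : Ω → Matrix (Fin N) (Fin T) ℝ := fun ω => (∑ k, δ k • X k ω) + D with hWdef
  have hWapp : ∀ ω, W ω = (∑ k, δ k • X k ω) + D := fun ω => rfl
  have hZ : ∀ ω, Y ω - (∑ k, β k • X k ω) - Λ * Fᵀ = e ω + W ω := by
    intro ω
    rw [hY ω, hWapp ω]
    have hsum : ∑ k, δ k • X k ω = (∑ k, β0 k • X k ω) - ∑ k, β k • X k ω := by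
      rw [← Finset.sum_sub_distrib]
      exact Finset.sum_congr rfl fun k _ => (sub_smul (β0 k) (β k) (X k ω))
    rw [hsum, hDdef]
    abel
  -- entries of W are in L²
  have hW2 : ∀ i t, MemLp (fun ω => W ω i t) 2 μ := by
    intro i t
    have hWe : (fun ω => W ω i t) = fun ω => (∑ k, δ k * X k ω i t) + D i t := by
      funext ω; rw [hWapp ω]; simp [Matrix.sum_apply]
    rw [hWe]
    exact memLp_entry_sums _ _ _ (fun k => hX2 k i t)
  have hIw : Integrable (fun ω => frobSq (W ω)) μ := integrable_frobSq hW2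
  have hIe : Integrable (fun ω => frobSq (e ω)) μ := integrable_frobSq he2
  -- cross terms vanish
  have hcross : ∀ i t, ∫ ω, e ω i t * W ω i t ∂μ = 0 := by
    intro i t
    have hfun : (fun ω => e ω i t * W ω i t) =
        fun ω => (∑ k, δ k * (X k ω i t * e ω i t)) + D i t * e ω i t := by
      funext ω; rw [hWapp ω]
      simp only [Matrix.add_apply, Matrix.sum_apply, Matrix.smul_apply, smul_eq_mul]
      rw [mul_add, Finset.mul_sum]
      congr 1
      · exact Finset.sum_congr rfl fun k _ => by ring
      · exact mul_comm _ _
    have h1 : ∀ k : Fin K, Integrable (fun ω => δ k * (X k ω i t * e ω i t)) μ :=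
      fun k => (memLp2_integrable_mul (hX2 k i t) (he2 i t)).const_mul (δ k)
    have h2 : Integrable (fun ω => D i t * e ω i t) μ :=
      ((he2 i t).integrable one_le_two).const_mul (D i t)
    rw [hfun, integral_add (integrable_finset_sum _ fun k _ => h1 k) h2,
      integral_finset_sum _ fun k _ => h1 k]
    simp [integral_const_mul, hexo, hmean]
  have hIcross : Integrable (fun ω => ∑ i, ∑ t, e ω i t * W ω i t) μ :=
    integrable_finset_sum _ fun i _ => integrable_finset_sum _ fun t _ =>
      memLp2_integrable_mul (he2 i t) (hW2 i t)
  -- main decomposition of the objective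
  have hpt : ∀ ω, frobSq (e ω + W ω) =
      frobSq (e ω) + frobSq (W ω) + 2 * ∑ i, ∑ t, e ω i t * W ω i t := by
    intro ω
    rw [frobSq_eq_sum, frobSq_eq_sum, frobSq_eq_sum, Finset.mul_sum,
      ← Finset.sum_add_distrib, ← Finset.sum_add_distrib]
    refine Finset.sum_congr rfl fun i _ => ?_
    rw [Finset.mul_sum, ← Finset.sum_add_distrib, ← Finset.sum_add_distrib]
    refine Finset.sum_congr rfl fun t _ => ?_
    simp only [Matrix.add_apply]
    ring
  have hQ : ∫ ω, frobSq (e ω + W ω) ∂μ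
      = (∫ ω, frobSq (e ω) ∂μ) + ∫ ω, frobSq (W ω) ∂μ := by
    have hzero : ∫ ω, ∑ i, ∑ t, e ω i t * W ω i t ∂μ = 0 := by
      rw [integral_finset_sum _ (fun i _ => integrable_finset_sum _ fun t _ =>
        memLp2_integrable_mul (he2 i t) (hW2 i t))]
      refine Finset.sum_eq_zero fun i _ => ?_
      rw [integral_finset_sum _ fun t _ => memLp2_integrable_mul (he2 i t) (hW2 i t)]
      exact Finset.sum_eq_zero fun t _ => hcross i t
    calc ∫ ω, frobSq (e ω + W ω) ∂μ
        = ∫ ω, (frobSq (e ω) + frobSq (W ω)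
            + 2 * ∑ i, ∑ t, e ω i t * W ω i t) ∂μ := by
          exact integral_congr_ae (Filter.Eventually.of_forall fun ω => hpt ω)
      _ = ((∫ ω, frobSq (e ω) ∂μ) + ∫ ω, frobSq (W ω) ∂μ)
            + 2 * ∫ ω, ∑ i, ∑ t, e ω i t * W ω i t ∂μ := by
          have hIew : Integrable (fun ω => frobSq (e ω) + frobSq (W ω)) μ := hIe.add hIw
          have hIc2 : Integrable (fun ω => 2 * ∑ i, ∑ t, e ω i t * W ω i t) μ :=
            hIcross.const_mul 2
          rw [integral_add hIew hIc2, integral_add hIe hIw, integral_const_mul]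
      _ = (∫ ω, frobSq (e ω) ∂μ) + ∫ ω, frobSq (W ω) ∂μ := by rw [hzero]; ring
  have hQ' : (∫ ω, frobSq (Y ω - (∑ k, β k • X k ω) - Λ * Fᵀ) ∂μ)
      = (∫ ω, frobSq (e ω) ∂μ) + ∫ ω, frobSq (W ω) ∂μ := by
    rw [show (fun ω => frobSq (Y ω - (∑ k, β k • X k ω) - Λ * Fᵀ))
      = fun ω => frobSq (e ω + W ω) from funext fun ω => by rw [hZ ω]]
    exact hQ
  have hWnn : 0 ≤ ∫ ω, frobSq (W ω) ∂μ := integral_nonneg fun ω => frobSq_nonneg _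
  refine ⟨by rw [hQ']; linarith, ?_⟩
  constructor
  · -- equality implies identification
    intro hEqQ
    have hW0 : ∫ ω, frobSq (W ω) ∂μ = 0 := by rw [hQ'] at hEqQ; linarith
    -- the sandwiched process
    have hFtG : Fᵀ * annMat F = 0 := by
      rw [← annMat_transpose F, ← Matrix.transpose_mul, annMat_mul_self, Matrix.transpose_zero]
    have hMD : annMat lam0 * D * annMat F = 0 := by
      rw [hDdef]
      have h1 : annMat lam0 * (lam0 * f0ᵀ) = 0 := by
        rw [← Matrix.mul_assoc, annMat_mul_self, Matrix.zero_mul]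
      have h2 : annMat lam0 * (Λ * Fᵀ) * annMat F = 0 := by
        rw [Matrix.mul_assoc (annMat lam0) (Λ * Fᵀ) (annMat F), Matrix.mul_assoc Λ,
          hFtG, Matrix.mul_zero, Matrix.mul_zero]
      rw [Matrix.mul_sub, Matrix.sub_mul, h1, Matrix.zero_mul, h2, sub_zero]
    have hMW : ∀ ω, annMat lam0 * W ω * annMat F
        = ∑ k, δ k • (annMat lam0 * X k ω * annMat F) := by
      intro ω
      rw [hWapp ω, Matrix.mul_add, Matrix.add_mul, hMD, add_zero, Matrix.mul_sum,
        Matrix.sum_mul]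
      exact Finset.sum_congr rfl fun k _ => by rw [Matrix.mul_smul, Matrix.smul_mul]
    have htr : ∀ ω, frobSq (annMat lam0 * W ω * annMat F)
        = ∑ k, ∑ l, δ k * δ l
            * Matrix.trace ((X l ω)ᵀ * annMat lam0 * X k ω * annMat F) := by
      intro ω
      rw [show frobSq (annMat lam0 * W ω * annMat F)
        = Matrix.trace ((annMat lam0 * W ω * annMat F)
          * (annMat lam0 * W ω * annMat F)ᵀ) from rfl, hMW]
      rw [Matrix.transpose_sum, Matrix.sum_mul]
      simp only [Matrix.transpose_smul, Matrix.mul_sum, Matrix.smul_mul, Matrix.mul_smul,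
        Matrix.trace_sum, Matrix.trace_smul, smul_eq_mul]
      refine Finset.sum_congr rfl fun k _ => Finset.sum_congr rfl fun l _ => ?_
      rw [trace_sandwich (annMat lam0) (annMat F) (annMat_transpose lam0) (annMat_idem lam0)
        (annMat_transpose F) (annMat_idem F) (X k ω) (X l ω)]
      ring
    have hItr : ∀ k l, Integrable
        (fun ω => Matrix.trace ((X l ω)ᵀ * annMat lam0 * X k ω * annMat F)) μ := by
      intro k l
      have hrw : (fun ω => Matrix.trace ((X l ω)ᵀ * annMat lam0 * X k ω * annMat F))
          = fun ω => ∑ i, ∑ j, (annMat lam0 * X k ω * annMat F) i j * X l ω i j := by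
        funext ω
        rw [← trace_mul_transpose_eq_sum,
          Matrix.trace_mul_comm (annMat lam0 * X k ω * annMat F) ((X l ω)ᵀ)]
        simp only [Matrix.mul_assoc]
      rw [hrw]
      exact integrable_finset_sum _ fun i _ => integrable_finset_sum _ fun j _ =>
        memLp2_integrable_mul (memLp_sandwich _ _ _ (fun a b => hX2 k a b) i j) (hX2 l i j)
    have hsand2 : ∀ i j, MemLp (fun ω => (annMat lam0 * W ω * annMat F) i j) 2 μ :=
      fun i j => memLp_sandwich _ _ _ hW2 i j
    have hIfs : Integrable (fun ω => frobSq (annMat lam0 * W ω * annMat F)) μ :=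
      integrable_frobSq hsand2
    have hle : ∫ ω, frobSq (annMat lam0 * W ω * annMat F) ∂μ ≤ ∫ ω, frobSq (W ω) ∂μ := by
      refine integral_mono hIfs hIw fun ω => ?_
      calc frobSq (annMat lam0 * W ω * annMat F) ≤ frobSq (annMat lam0 * W ω) :=
          frobSq_mul_right_le _ (annMat_transpose F) (annMat_idem F) _
        _ ≤ frobSq (W ω) := frobSq_mul_left_le _ (annMat_transpose lam0) (annMat_idem lam0) _
    have hsum : ∫ ω, frobSq (annMat lam0 * W ω * annMat F) ∂μ
        = ∑ k, ∑ l, δ k * δ l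
            * ∫ ω, Matrix.trace ((X l ω)ᵀ * annMat lam0 * X k ω * annMat F) ∂μ := by
      calc ∫ ω, frobSq (annMat lam0 * W ω * annMat F) ∂μ
          = ∫ ω, (∑ k, ∑ l, δ k * δ l
              * Matrix.trace ((X l ω)ᵀ * annMat lam0 * X k ω * annMat F)) ∂μ :=
            integral_congr_ae (Filter.Eventually.of_forall fun ω => htr ω)
        _ = ∑ k, ∑ l, δ k * δ l
              * ∫ ω, Matrix.trace ((X l ω)ᵀ * annMat lam0 * X k ω * annMat F) ∂μ := by
            rw [integral_finset_sum _ (fun k _ => integrable_finset_sum _ fun l _ =>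
              (hItr k l).const_mul _)]
            refine Finset.sum_congr rfl fun k _ => ?_
            rw [integral_finset_sum _ fun l _ => (hItr k l).const_mul _]
            exact Finset.sum_congr rfl fun l _ => integral_const_mul _ _
    have hβ : β = β0 := by
      by_contra hne
      have hδne : δ ≠ 0 := by
        intro h0
        apply hne
        funext k
        have := congrFun h0 k
        simp only [hδdef, Pi.zero_apply] at this
        linarith
      have hpos := hNC F δ hδne
      have hswap : (∑ k, ∑ l, δ k * δ l
            * ∫ ω, Matrix.trace ((X k ω)ᵀ * annMat lam0 * X l ω * annMat F) ∂μ)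
          = ∑ k, ∑ l, δ k * δ l
            * ∫ ω, Matrix.trace ((X l ω)ᵀ * annMat lam0 * X k ω * annMat F) ∂μ := by
        rw [Finset.sum_comm]
        exact Finset.sum_congr rfl fun k _ => Finset.sum_congr rfl fun l _ => by ring
      rw [hswap, ← hsum] at hpos
      linarith
    have hδ0 : ∀ k, δ k = 0 := fun k => by simp [hδdef, hβ]
    have hWD : ∀ ω, W ω = D := fun ω => by
      rw [hWapp ω]
      simp [hδ0]
    have hfd : frobSq D = 0 := by
      have hcd : ∫ ω, frobSq (W ω) ∂μ = frobSq D := by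
        rw [show (fun ω => frobSq (W ω)) = fun _ => frobSq D from funext fun ω => by
          rw [hWD ω]]
        simp
      linarith
    have hD0 : D = 0 := (frobSq_eq_zero_iff D).mp hfd
    refine ⟨hβ, ?_⟩
    rw [hDdef] at hD0
    exact (sub_eq_zero.mp hD0).symm
  · -- identification implies equality
    rintro ⟨hb, hLF⟩
    have hδ0 : ∀ k, δ k = 0 := fun k => by simp [hδdef, hb]
    have hD0 : D = 0 := by rw [hDdef, hLF, sub_self]
    have hWz : ∀ ω, W ω = 0 := fun ω => by
      rw [hWapp ω, hD0]
      simp [hδ0]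
    have hWint0 : ∫ ω, frobSq (W ω) ∂μ = 0 := by
      rw [show (fun ω => frobSq (W ω)) = fun _ => (0:ℝ) from funext fun ω => by
        rw [hWz ω]; simp [frobSq]]
      simp
    rw [hQ', hWint0, add_zero]
end

section
/- Let A be an N×T matrix and 0 ≤ R ≤ T. Then the infimum over Λ ∈ ℝ^{N×R} and F ∈ ℝ^{T×R} of ‖A − Λ F'‖²_HS equals the infimum over F ∈ ℝ^{T×R} of Tr(A M_F A'), and both equal Σ_{r=R+1}^{T} μ_r(A'A); moreover both infima are attained (e.g. by taking the columns of F to be orthonormal eigenvectors of A'A corresponding to its R largest eigenvalues and Λ = A F). -/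
open Matrix MeasureTheory
open scoped BigOperators

namespace Statement2Aux

open Matrix

variable {n m k : ℕ}

lemma conjT_eq (A : Matrix (Fin n) (Fin m) ℝ) : Aᴴ = Aᵀ := by
  ext i j; simp [Matrix.conjTranspose_apply]

lemma toEL_mul (A : Matrix (Fin n) (Fin m) ℝ) (B : Matrix (Fin m) (Fin k) ℝ) :
    Matrix.toEuclideanLin (A * B)
      = (Matrix.toEuclideanLin A).comp (Matrix.toEuclideanLin B) := by
  rw [Matrix.toEuclideanLin_eq_toLin]
  exact Matrix.toLin_mul (PiLp.basisFun 2 ℝ (Fin k)) (PiLp.basisFun 2 ℝ (Fin m))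
    (PiLp.basisFun 2 ℝ (Fin n)) A B

lemma toEL_projMat (F : Matrix (Fin n) (Fin m) ℝ) :
    Matrix.toEuclideanLin (projMat F)
      = ((((LinearMap.range (Matrix.toEuclideanLin F)).subtypeL.comp
          (Submodule.orthogonalProjection (LinearMap.range (Matrix.toEuclideanLin F)))) :
          EuclideanSpace ℝ (Fin n) →L[ℝ] EuclideanSpace ℝ (Fin n)) :
          EuclideanSpace ℝ (Fin n) →ₗ[ℝ] EuclideanSpace ℝ (Fin n)) := by
  simp [projMat]

lemma projMat_mul_projMat (F : Matrix (Fin n) (Fin m) ℝ) :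
    projMat F * projMat F = projMat F := by
  apply Matrix.toEuclideanLin.injective
  rw [toEL_mul, toEL_projMat]
  ext x
  simp [Submodule.orthogonalProjectionOnto_mem_subspace_eq_self,
    Submodule.starProjection_eq_self_iff.mpr (Submodule.starProjection_apply_mem _ x)]

lemma projMat_mul_self (F : Matrix (Fin n) (Fin m) ℝ) :
    projMat F * F = F := by
  apply Matrix.toEuclideanLin.injective
  rw [toEL_mul, toEL_projMat]
  ext x
  have hx : Matrix.toEuclideanLin F x ∈ LinearMap.range (Matrix.toEuclideanLin F) := ⟨x, rfl⟩
  simp [← Submodule.starProjection_apply, Submodule.starProjection_eq_self_iff.mpr hx]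

lemma projMat_transpose (F : Matrix (Fin n) (Fin m) ℝ) :
    (projMat F)ᵀ = projMat F := by
  apply Matrix.toEuclideanLin.injective
  rw [← conjT_eq, Matrix.toEuclideanLin_conjTranspose_eq_adjoint, toEL_projMat]
  symm
  rw [LinearMap.eq_adjoint_iff]
  intro x y
  exact Submodule.inner_starProjection_left_eq_right _ x y

lemma projMat_mulVec_mem (F : Matrix (Fin n) (Fin m) ℝ) (v : Fin n → ℝ) :
    ∃ y : Fin m → ℝ, projMat F *ᵥ v = F *ᵥ y := by
  set x : EuclideanSpace ℝ (Fin n) := (WithLp.equiv 2 (Fin n → ℝ)).symm v with hxdef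
  have hmem : Matrix.toEuclideanLin (projMat F) x
      ∈ LinearMap.range (Matrix.toEuclideanLin F) := by
    rw [toEL_projMat]
    simpa using SetLike.coe_mem
      (Submodule.orthogonalProjection (LinearMap.range (Matrix.toEuclideanLin F)) x)
  obtain ⟨z, hz⟩ := hmem
  refine ⟨WithLp.equiv 2 (Fin m → ℝ) z, ?_⟩
  have h1 : Matrix.toEuclideanLin (projMat F) x
      = (WithLp.equiv 2 (Fin n → ℝ)).symm (projMat F *ᵥ v) := by
    rw [Matrix.toEuclideanLin_apply, hxdef]
    simp
  have h2 : Matrix.toEuclideanLin F z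
      = (WithLp.equiv 2 (Fin n → ℝ)).symm (F *ᵥ (WithLp.equiv 2 (Fin m → ℝ) z)) :=
    Matrix.toEuclideanLin_apply F z
  have h3 := hz.symm.trans h2
  rw [h1] at h3
  exact (WithLp.equiv 2 (Fin n → ℝ)).symm.injective h3

lemma exists_right_factor (F : Matrix (Fin n) (Fin m) ℝ) (B : Matrix (Fin n) (Fin k) ℝ) :
    ∃ C : Matrix (Fin m) (Fin k) ℝ, projMat F * B = F * C := by
  choose y hy using fun j : Fin k => projMat_mulVec_mem F (fun i => B i j)
  refine ⟨fun a j => y j a, ?_⟩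
  ext i j
  have := congrFun (hy j) i
  rw [Matrix.mul_apply]
  show _ = ∑ l, F i l * y j l
  simpa [Matrix.mul_apply, Matrix.mulVec, dotProduct] using this

lemma transpose_mul_projMat (F : Matrix (Fin n) (Fin m) ℝ) :
    Fᵀ * projMat F = Fᵀ := by
  have := congrArg Matrix.transpose (projMat_mul_self F)
  rw [Matrix.transpose_mul, projMat_transpose F] at this
  exact this

lemma projMat_of_orthonormal (F : Matrix (Fin n) (Fin m) ℝ) (hF : Fᵀ * F = 1) :
    projMat F = F * Fᵀ := by
  obtain ⟨C, hC⟩ := exists_right_factor F (1 : Matrix (Fin n) (Fin n) ℝ)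
  rw [mul_one] at hC
  have h2 : (F * Fᵀ) * projMat F = F * Fᵀ := by
    rw [Matrix.mul_assoc, transpose_mul_projMat]
  have h3 : (F * Fᵀ) * projMat F = projMat F := by
    rw [hC, ← Matrix.mul_assoc (F * Fᵀ) F C, Matrix.mul_assoc F Fᵀ F, hF, Matrix.mul_one]
  rw [← h3, h2]

lemma annMat_transpose (F : Matrix (Fin n) (Fin m) ℝ) :
    (annMat F)ᵀ = annMat F := by
  simp [annMat, Matrix.transpose_sub, projMat_transpose]

lemma annMat_mul_annMat (F : Matrix (Fin n) (Fin m) ℝ) :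
    annMat F * annMat F = annMat F := by
  unfold annMat
  rw [sub_mul, one_mul, mul_sub, mul_one, projMat_mul_projMat, sub_self, sub_zero]

lemma transpose_mul_annMat (F : Matrix (Fin n) (Fin m) ℝ) :
    Fᵀ * annMat F = 0 := by
  unfold annMat
  rw [Matrix.mul_sub, Matrix.mul_one, transpose_mul_projMat, sub_self]

lemma frobSq_eq_sum (B : Matrix (Fin n) (Fin m) ℝ) :
    frobSq B = ∑ i, ∑ j, B i j ^ 2 := by
  simp [frobSq, Matrix.trace, Matrix.diag, Matrix.mul_apply, sq]

lemma frobSq_nonneg (B : Matrix (Fin n) (Fin m) ℝ) : 0 ≤ frobSq B := by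
  rw [frobSq_eq_sum]
  positivity

lemma frobSq_mul_symm_idem (X : Matrix (Fin k) (Fin n) ℝ) (Q : Matrix (Fin n) (Fin n) ℝ)
    (hQt : Qᵀ = Q) (hQQ : Q * Q = Q) :
    frobSq (X * Q) = Matrix.trace (X * Q * Xᵀ) := by
  unfold frobSq
  rw [Matrix.transpose_mul, hQt, Matrix.mul_assoc X Q (Q * Xᵀ), ← Matrix.mul_assoc Q Q Xᵀ,
    hQQ, ← Matrix.mul_assoc]

lemma frobSq_mul_ann_le (X : Matrix (Fin k) (Fin n) ℝ) (F : Matrix (Fin n) (Fin m) ℝ) :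
    frobSq (X * annMat F) ≤ frobSq X := by
  have hsub : X - X * annMat F = X * projMat F := by
    unfold annMat
    rw [Matrix.mul_sub, Matrix.mul_one, sub_sub_cancel]
  have key : frobSq X - frobSq (X * annMat F) = frobSq (X * projMat F) := by
    rw [frobSq_mul_symm_idem X _ (annMat_transpose F) (annMat_mul_annMat F),
      frobSq_mul_symm_idem X _ (projMat_transpose F) (projMat_mul_projMat F)]
    show Matrix.trace (X * Xᵀ) - _ = _
    rw [← Matrix.trace_sub]
    congr 1
    rw [← Matrix.sub_mul, hsub]
  have := frobSq_nonneg (X * projMat F)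
  linarith

lemma trace_mul_diag (X : Matrix (Fin n) (Fin n) ℝ) (w : Fin n → ℝ) :
    Matrix.trace (X * Matrix.diagonal w) = ∑ j, X j j * w j := by
  simp [Matrix.trace, Matrix.diag, Matrix.mul_diagonal]

lemma diag_transpose_mul_nonneg (X : Matrix (Fin n) (Fin m) ℝ) (j : Fin m) :
    0 ≤ (Xᵀ * X) j j := by
  rw [Matrix.mul_apply]
  exact Finset.sum_nonneg fun i _ => by rw [Matrix.transpose_apply]; exact mul_self_nonneg _

lemma spectral_real {S : Matrix (Fin n) (Fin n) ℝ} (hS : S.IsHermitian) :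
    S = (hS.eigenvectorUnitary : Matrix (Fin n) (Fin n) ℝ) * Matrix.diagonal hS.eigenvalues
        * (hS.eigenvectorUnitary : Matrix (Fin n) (Fin n) ℝ)ᵀ := by
  have hdiag : Matrix.diagonal ((RCLike.ofReal : ℝ → ℝ) ∘ hS.eigenvalues)
      = Matrix.diagonal hS.eigenvalues := by
    simp [Function.comp, RCLike.ofReal_real_eq_id]
  conv_lhs => rw [hS.spectral_theorem]
  rw [hdiag, Unitary.conjStarAlgAut_apply, Matrix.star_eq_conjTranspose, conjT_eq]

lemma unitary_tmul {S : Matrix (Fin n) (Fin n) ℝ} (hS : S.IsHermitian) :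
    (hS.eigenvectorUnitary : Matrix (Fin n) (Fin n) ℝ)ᵀ
      * (hS.eigenvectorUnitary : Matrix (Fin n) (Fin n) ℝ) = 1 := by
  have := Matrix.mem_unitaryGroup_iff'.mp (hS.eigenvectorUnitary).2
  rwa [Matrix.star_eq_conjTranspose, conjT_eq] at this

lemma unitary_mult {S : Matrix (Fin n) (Fin n) ℝ} (hS : S.IsHermitian) :
    (hS.eigenvectorUnitary : Matrix (Fin n) (Fin n) ℝ)
      * (hS.eigenvectorUnitary : Matrix (Fin n) (Fin n) ℝ)ᵀ = 1 := by
  have := Matrix.mem_unitaryGroup_iff.mp (hS.eigenvectorUnitary).2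
  rwa [Matrix.star_eq_conjTranspose, conjT_eq] at this

lemma trace_eq_sum_eigs {S : Matrix (Fin n) (Fin n) ℝ} (hS : S.IsHermitian) :
    Matrix.trace S = ∑ j, hS.eigenvalues j := by
  conv_lhs => rw [spectral_real hS]
  rw [Matrix.trace_mul_cycle, unitary_tmul hS, one_mul, Matrix.trace_diagonal]

lemma eigenvalues_idem {P : Matrix (Fin n) (Fin n) ℝ} (hP : P.IsHermitian)
    (hPP : P * P = P) (j : Fin n) :
    hP.eigenvalues j = 0 ∨ hP.eigenvalues j = 1 := by
  have hv := hP.mulVec_eigenvectorBasis j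
  have h2 : P *ᵥ (P *ᵥ ⇑(hP.eigenvectorBasis j))
      = (hP.eigenvalues j * hP.eigenvalues j) • ⇑(hP.eigenvectorBasis j) := by
    rw [hv, Matrix.mulVec_smul, hv, smul_smul]
  have h3 : P *ᵥ (P *ᵥ ⇑(hP.eigenvectorBasis j)) = hP.eigenvalues j • ⇑(hP.eigenvectorBasis j) := by
    rw [Matrix.mulVec_mulVec, hPP, hv]
  have h4 : (hP.eigenvalues j * hP.eigenvalues j - hP.eigenvalues j)
      • ⇑(hP.eigenvectorBasis j) = 0 := by
    rw [sub_smul, ← h2, h3, sub_self]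
  have hvne : ⇑(hP.eigenvectorBasis j) ≠ 0 := by
    intro h
    have h0 : hP.eigenvectorBasis j = 0 := by
      apply PiLp.ext
      intro i
      exact congrFun h i
    have hnorm := hP.eigenvectorBasis.orthonormal.1 j
    rw [h0, norm_zero] at hnorm
    exact one_ne_zero hnorm.symm
  rcases smul_eq_zero.mp h4 with h | h
  · have : hP.eigenvalues j * (hP.eigenvalues j - 1) = 0 := by ring_nf; linarith [h]
    rcases mul_eq_zero.mp this with h' | h'
    · exact Or.inl h'
    · exact Or.inr (by linarith)
  · exact absurd h hvne

lemma trace_projMat_le {T R : ℕ} (F : Matrix (Fin T) (Fin R) ℝ) :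
    Matrix.trace (projMat F) ≤ (R : ℝ) := by
  have hP : (projMat F).IsHermitian := (conjT_eq _).trans (projMat_transpose F)
  have hrank : (projMat F).rank ≤ R := by
    obtain ⟨C, hC⟩ := exists_right_factor F (1 : Matrix (Fin T) (Fin T) ℝ)
    rw [mul_one] at hC
    calc (projMat F).rank = (F * C).rank := by rw [hC]
      _ ≤ F.rank := Matrix.rank_mul_le_left F C
      _ ≤ R := Matrix.rank_le_width F
  rw [trace_eq_sum_eigs hP]
  have h01 := eigenvalues_idem hP (projMat_mul_projMat F)
  calc ∑ j, hP.eigenvalues j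
      ≤ ∑ j : Fin T, (if hP.eigenvalues j ≠ 0 then (1:ℝ) else 0) := by
        apply Finset.sum_le_sum
        intro j _
        rcases h01 j with h | h <;> simp [h]
    _ = ((Finset.univ.filter (fun j : Fin T => hP.eigenvalues j ≠ 0)).card : ℝ) := by
        rw [Finset.sum_boole]
    _ ≤ (R : ℝ) := by
        have hcard := hP.rank_eq_card_non_zero_eigs
        rw [Fintype.card_subtype] at hcard
        have : ((Finset.univ.filter (fun j : Fin T => hP.eigenvalues j ≠ 0)).card : ℝ)
            = ((projMat F).rank : ℝ) := by rw [hcard]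
        rw [this]
        exact_mod_cast hrank

lemma top_card {T R : ℕ} (hR : R ≤ T) :
    (Finset.univ.filter (fun j : Fin T => T - R ≤ (j : ℕ))).card = R := by
  conv_rhs => rw [← Finset.card_range R]
  apply Finset.card_bij' (i := fun (j : Fin T) _ => (j : ℕ) - (T - R))
    (j := fun (a : ℕ) (ha : a ∈ Finset.range R) =>
      (⟨T - R + a, by simp only [Finset.mem_range] at ha; omega⟩ : Fin T))
  case hi =>
    intro a ha
    simp only [Finset.mem_filter, Finset.mem_univ, true_and] at ha
    simp only [Finset.mem_range]
    have := a.isLt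
    omega
  case hj =>
    intro a ha
    simp only [Finset.mem_range] at ha
    simp only [Finset.mem_filter, Finset.mem_univ, true_and]
    omega
  case left_inv =>
    intro a ha
    simp only [Finset.mem_filter, Finset.mem_univ, true_and] at ha
    apply Fin.ext
    simp only []
    omega
  case right_inv =>
    intro a ha
    simp only [Finset.mem_range] at ha
    simp only []
    omega

lemma key_lower {T R : ℕ} (hR : R ≤ T) (e q : Fin T → ℝ)
    (hmono : Monotone e) (he0 : ∀ j, 0 ≤ e j)
    (hq0 : ∀ j, 0 ≤ q j) (hq1 : ∀ j, q j ≤ 1) (hqs : ∑ j, q j ≤ (R : ℝ)) :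
    ∑ j, e j * q j ≤ ∑ j ∈ Finset.univ.filter (fun j : Fin T => T - R ≤ (j : ℕ)), e j := by
  rcases Nat.eq_zero_or_pos R with hR0 | hRpos
  · subst hR0
    have hq' : ∀ j, q j = 0 := by
      intro j
      have h1 : q j ≤ ∑ i, q i :=
        Finset.single_le_sum (fun i _ => hq0 i) (Finset.mem_univ j)
      have h2 := hq0 j
      simp only [Nat.cast_zero] at hqs
      linarith
    have : ∑ j, e j * q j = 0 := by
      apply Finset.sum_eq_zero
      intro j _
      rw [hq' j, mul_zero]
    rw [this]
    exact Finset.sum_nonneg fun j _ => he0 j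
  · have hTR : T - R < T := by omega
    set t := e ⟨T - R, hTR⟩ with ht
    set Top := Finset.univ.filter (fun j : Fin T => T - R ≤ (j : ℕ)) with hTopdef
    have hcard : (Top.card : ℝ) = R := by rw [hTopdef, top_card hR]
    have step1 : ∑ j ∈ Top, e j * q j ≤ ∑ j ∈ Top, (e j + t * (q j - 1)) := by
      apply Finset.sum_le_sum
      intro j hj
      have hjmem : T - R ≤ (j : ℕ) := by
        rw [hTopdef] at hj
        simpa using hj
      have hjt : t ≤ e j := hmono (show (⟨T - R, hTR⟩ : Fin T) ≤ j from hjmem)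
      have hmul : 0 ≤ (e j - t) * (1 - q j) :=
        mul_nonneg (by linarith) (by linarith [hq1 j])
      nlinarith [hmul]
    have step2 : ∑ j ∈ Topᶜ, e j * q j ≤ ∑ j ∈ Topᶜ, t * q j := by
      apply Finset.sum_le_sum
      intro j hj
      have hjmem : (j : ℕ) < T - R := by
        rw [hTopdef] at hj
        simp only [Finset.mem_compl, Finset.mem_filter, Finset.mem_univ, true_and] at hj
        omega
      have hjt : e j ≤ t := hmono (le_of_lt (show (j : Fin T) < ⟨T - R, hTR⟩ from hjmem))
      exact mul_le_mul_of_nonneg_right hjt (hq0 j)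
    have hsplit : ∑ j, e j * q j = ∑ j ∈ Top, e j * q j + ∑ j ∈ Topᶜ, e j * q j :=
      (Finset.sum_add_sum_compl Top _).symm
    have hqsplit : ∑ j ∈ Top, q j + ∑ j ∈ Topᶜ, q j = ∑ j, q j :=
      Finset.sum_add_sum_compl Top q
    have harith : ∑ j ∈ Top, (e j + t * (q j - 1)) + ∑ j ∈ Topᶜ, t * q j
        = ∑ j ∈ Top, e j + t * (∑ j, q j - Top.card) := by
      rw [Finset.sum_add_distrib, ← Finset.mul_sum, ← Finset.mul_sum, Finset.sum_sub_distrib,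
        Finset.sum_const, nsmul_eq_mul, mul_one]
      rw [← hqsplit]
      ring
    have hle : t * (∑ j, q j - Top.card) ≤ 0 := by
      apply mul_nonpos_of_nonneg_of_nonpos (he0 _)
      rw [hcard]
      linarith
    linarith [step1, step2, hsplit, harith, hle]

lemma bot_eq_compl {T R : ℕ} :
    (Finset.univ.filter (fun j : Fin T => (j : ℕ) < T - R))
      = (Finset.univ.filter (fun j : Fin T => T - R ≤ (j : ℕ)))ᶜ := by
  ext j
  simp only [Finset.mem_filter, Finset.mem_univ, true_and, Finset.mem_compl]
  omega

lemma mu_sum_eq {T : ℕ} {S : Matrix (Fin T) (Fin T) ℝ} (hS : S.IsHermitian) (R : ℕ)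
    (hR : R ≤ T) :
    ∑ r ∈ Finset.Icc (R + 1) T, mu S r
      = ∑ j ∈ Finset.univ.filter (fun j : Fin T => (j : ℕ) < T - R),
          (hS.eigenvalues ∘ Tuple.sort hS.eigenvalues) j := by
  apply Finset.sum_bij' (i := fun (r : ℕ) (hr : r ∈ Finset.Icc (R + 1) T) =>
      (⟨T - r, by simp only [Finset.mem_Icc] at hr; omega⟩ : Fin T))
    (j := fun (x : Fin T) _ => T - (x : ℕ))
  case hi =>
    intro r hr
    simp only [Finset.mem_Icc] at hr
    simp only [Finset.mem_filter, Finset.mem_univ, true_and]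
    omega
  case hj =>
    intro x hx
    simp only [Finset.mem_filter, Finset.mem_univ, true_and] at hx
    simp only [Finset.mem_Icc]
    have := x.isLt
    omega
  case left_neg =>
    intro r hr
    simp only [Finset.mem_Icc] at hr
    simp only []
    omega
  case right_neg =>
    intro x hx
    simp only [Finset.mem_filter, Finset.mem_univ, true_and] at hx
    apply Fin.ext
    simp only []
    have := x.isLt
    omega
  case h =>
    intro r hr
    simp only [Finset.mem_Icc] at hr
    rw [mu, dif_pos ⟨hS, by omega, hr.2⟩]
    show (hS.eigenvalues ∘ Tuple.sort hS.eigenvalues) _ = _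
    congr 1
    apply Fin.ext
    rw [Fin.val_rev]
    simp only []
    omega

lemma hermS {N T : ℕ} (A : Matrix (Fin N) (Fin T) ℝ) : (Aᵀ * A).IsHermitian := by
  rw [← conjT_eq A]
  exact Matrix.isHermitian_conjTranspose_mul_self A

lemma trace_ann_split {N T R : ℕ} (A : Matrix (Fin N) (Fin T) ℝ)
    (F : Matrix (Fin T) (Fin R) ℝ) :
    Matrix.trace (A * annMat F * Aᵀ)
      = Matrix.trace (Aᵀ * A) - Matrix.trace (projMat F * (Aᵀ * A)) := by
  rw [Matrix.trace_mul_cycle, show annMat F = 1 - projMat F from rfl, Matrix.mul_sub,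
    Matrix.mul_one, Matrix.trace_sub, Matrix.trace_mul_comm (Aᵀ * A) (projMat F)]

lemma lower_bound {N T R : ℕ} (A : Matrix (Fin N) (Fin T) ℝ) (hR : R ≤ T)
    (F : Matrix (Fin T) (Fin R) ℝ) :
    ∑ r ∈ Finset.Icc (R + 1) T, mu (Aᵀ * A) r ≤ Matrix.trace (A * annMat F * Aᵀ) := by
  have hS := hermS A
  set U : Matrix (Fin T) (Fin T) ℝ := (hS.eigenvectorUnitary : Matrix (Fin T) (Fin T) ℝ)
    with hU
  set d : Fin T → ℝ := hS.eigenvalues with hd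
  set σ : Equiv.Perm (Fin T) := Tuple.sort d with hσ
  -- trace of P S as a weighted sum
  have hq_def : Matrix.trace (projMat F * (Aᵀ * A))
      = ∑ j, (Uᵀ * projMat F * U) j j * d j := by
    conv_lhs => rw [spectral_real hS]
    rw [← Matrix.mul_assoc, Matrix.trace_mul_comm, ← Matrix.mul_assoc, ← Matrix.mul_assoc,
      trace_mul_diag]
  -- q bounds
  have hfact : Uᵀ * projMat F * U = (projMat F * U)ᵀ * (projMat F * U) := by
    rw [Matrix.transpose_mul, projMat_transpose,
      Matrix.mul_assoc Uᵀ (projMat F) (projMat F * U),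
      ← Matrix.mul_assoc (projMat F) (projMat F) U, projMat_mul_projMat, ← Matrix.mul_assoc]
  have hq0 : ∀ j, 0 ≤ (Uᵀ * projMat F * U) j j := by
    intro j
    rw [hfact]
    exact diag_transpose_mul_nonneg _ j
  have expand : Uᵀ * (annMat F * U) = Uᵀ * U - Uᵀ * projMat F * U := by
    rw [show annMat F = 1 - projMat F from rfl, Matrix.sub_mul, Matrix.one_mul,
      Matrix.mul_sub, ← Matrix.mul_assoc]
  have hMfact : Uᵀ * U - Uᵀ * projMat F * U = (annMat F * U)ᵀ * (annMat F * U) := by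
    rw [Matrix.transpose_mul, annMat_transpose,
      Matrix.mul_assoc Uᵀ (annMat F) (annMat F * U),
      ← Matrix.mul_assoc (annMat F) (annMat F) U, annMat_mul_annMat, expand]
  have hq1 : ∀ j, (Uᵀ * projMat F * U) j j ≤ 1 := by
    intro j
    have h2 := diag_transpose_mul_nonneg (annMat F * U) j
    rw [← hMfact] at h2
    have hUU : (Uᵀ * U) j j = 1 := by
      rw [unitary_tmul hS, Matrix.one_apply_eq]
    have h3 : (Uᵀ * U - Uᵀ * projMat F * U) j j
        = (Uᵀ * U) j j - (Uᵀ * projMat F * U) j j := by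
      simp [Matrix.sub_apply]
    rw [h3, hUU] at h2
    linarith
  have hqs : ∑ j, (Uᵀ * projMat F * U) j j ≤ (R : ℝ) := by
    have htr : ∑ j, (Uᵀ * projMat F * U) j j = Matrix.trace (Uᵀ * projMat F * U) := by
      simp [Matrix.trace, Matrix.diag]
    rw [htr, Matrix.trace_mul_cycle, unitary_mult hS, Matrix.one_mul]
    exact trace_projMat_le F
  -- permuted versions
  have hperm : ∀ f : Fin T → ℝ, ∑ j, f (σ j) = ∑ j, f j := fun f => Equiv.sum_comp σ f
  have emono : Monotone (d ∘ σ) := by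
    rw [hσ]
    exact Tuple.monotone_sort d
  have hpsd : (Aᵀ * A).PosSemidef := by
    rw [← conjT_eq A]
    exact Matrix.posSemidef_conjTranspose_mul_self A
  have he0 : ∀ j, 0 ≤ (d ∘ σ) j := fun j => hpsd.eigenvalues_nonneg (σ j)
  have hkey := key_lower hR (d ∘ σ) (fun j => (Uᵀ * projMat F * U) (σ j) (σ j)) emono he0
    (fun j => hq0 (σ j)) (fun j => hq1 (σ j))
    (by rw [hperm (fun j => (Uᵀ * projMat F * U) j j)]; exact hqs)
  have hkey2 : ∑ j, (Uᵀ * projMat F * U) j j * d j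
      ≤ ∑ j ∈ Finset.univ.filter (fun j : Fin T => T - R ≤ (j : ℕ)), (d ∘ σ) j := by
    have hl : ∑ j, (d ∘ σ) j * (Uᵀ * projMat F * U) (σ j) (σ j)
        = ∑ j, (Uᵀ * projMat F * U) j j * d j := by
      rw [← hperm (fun j => (Uᵀ * projMat F * U) j j * d j)]
      apply Finset.sum_congr rfl
      intro j _
      simp [Function.comp, mul_comm]
    rw [← hl]
    exact hkey
  -- sum splitting
  have hsplitsum : ∑ j ∈ Finset.univ.filter (fun j : Fin T => T - R ≤ (j : ℕ)), (d ∘ σ) j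
      + ∑ j ∈ Finset.univ.filter (fun j : Fin T => (j : ℕ) < T - R), (d ∘ σ) j
      = ∑ j, (d ∘ σ) j := by
    rw [bot_eq_compl]
    exact Finset.sum_add_sum_compl _ _
  have htrS : Matrix.trace (Aᵀ * A) = ∑ j, (d ∘ σ) j := by
    rw [trace_eq_sum_eigs hS, ← hperm d]
    simp [Function.comp]
  have hmu := mu_sum_eq hS R hR
  rw [trace_ann_split A F, hq_def, hmu, htrS]
  have : ∑ j ∈ Finset.univ.filter (fun j : Fin T => (j : ℕ) < T - R),
      (hS.eigenvalues ∘ Tuple.sort hS.eigenvalues) j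
      = ∑ j ∈ Finset.univ.filter (fun j : Fin T => (j : ℕ) < T - R), (d ∘ σ) j := by
    apply Finset.sum_congr rfl
    intro j _
    rw [hd, hσ]
  rw [this]
  linarith [hkey2, hsplitsum]

lemma attain {N T R : ℕ} (A : Matrix (Fin N) (Fin T) ℝ) (hR : R ≤ T) :
    ∃ F : Matrix (Fin T) (Fin R) ℝ,
      Matrix.trace (A * annMat F * Aᵀ) = ∑ r ∈ Finset.Icc (R + 1) T, mu (Aᵀ * A) r := by
  have hS := hermS A
  set U : Matrix (Fin T) (Fin T) ℝ := (hS.eigenvectorUnitary : Matrix (Fin T) (Fin T) ℝ)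
    with hU
  set d : Fin T → ℝ := hS.eigenvalues with hd
  set σ : Equiv.Perm (Fin T) := Tuple.sort d with hσ
  have htlt : ∀ k : Fin R, T - R + (k : ℕ) < T := by
    intro k
    have := k.isLt
    omega
  set top : Fin R → Fin T := fun k => σ ⟨T - R + (k : ℕ), htlt k⟩ with htop
  have htopinj : Function.Injective top := by
    intro a b h
    rw [htop] at h
    have h2 := σ.injective h
    have h3 : T - R + (a : ℕ) = T - R + (b : ℕ) := congrArg Fin.val h2
    apply Fin.ext
    omega
  refine ⟨Matrix.of fun i k => U i (top k), ?_⟩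
  set F : Matrix (Fin T) (Fin R) ℝ := Matrix.of fun i k => U i (top k) with hF
  have hFtF : Fᵀ * F = 1 := by
    ext k l
    have hcalc : (Fᵀ * F) k l = (Uᵀ * U) (top k) (top l) := by
      simp [hF, Matrix.mul_apply, Matrix.transpose_apply]
    rw [hcalc, unitary_tmul hS]
    by_cases hkl : k = l
    · subst hkl
      simp [Matrix.one_apply]
    · have hne : top k ≠ top l := fun h => hkl (htopinj h)
      simp [Matrix.one_apply, hkl, hne]
  have hPF : projMat F = F * Fᵀ := projMat_of_orthonormal F hFtF
  have hD : Uᵀ * (Aᵀ * A) * U = Matrix.diagonal d := by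
    conv_lhs => rw [spectral_real hS]
    simp only [← Matrix.mul_assoc]
    rw [unitary_tmul hS, Matrix.one_mul, Matrix.mul_assoc, unitary_tmul hS, Matrix.mul_one]
  have hPS : Matrix.trace (projMat F * (Aᵀ * A)) = ∑ k, (Fᵀ * (Aᵀ * A) * F) k k := by
    rw [hPF, Matrix.mul_assoc F Fᵀ (Aᵀ * A), Matrix.trace_mul_comm F (Fᵀ * (Aᵀ * A)),
      ← Matrix.mul_assoc]
    simp [Matrix.trace, Matrix.diag]
  have hentry : ∀ k, (Fᵀ * (Aᵀ * A) * F) k k = (Uᵀ * (Aᵀ * A) * U) (top k) (top k) := by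
    intro k
    simp [hF, Matrix.mul_apply, Matrix.transpose_apply]
  have hPS2 : Matrix.trace (projMat F * (Aᵀ * A)) = ∑ k : Fin R, (d ∘ σ) ⟨T - R + (k : ℕ), htlt k⟩ := by
    rw [hPS]
    apply Finset.sum_congr rfl
    intro k _
    rw [hentry k, hD, Matrix.diagonal_apply_eq]
    rfl
  have htopsum : ∑ k : Fin R, (d ∘ σ) ⟨T - R + (k : ℕ), htlt k⟩
      = ∑ j ∈ Finset.univ.filter (fun j : Fin T => T - R ≤ (j : ℕ)), (d ∘ σ) j := by
    apply Finset.sum_bij' (i := fun (k : Fin R) _ => (⟨T - R + (k : ℕ), htlt k⟩ : Fin T))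
      (j := fun (x : Fin T) (hx : x ∈ Finset.univ.filter (fun j : Fin T => T - R ≤ (j : ℕ))) =>
        (⟨(x : ℕ) - (T - R), by
          simp only [Finset.mem_filter, Finset.mem_univ, true_and] at hx
          have := x.isLt
          omega⟩ : Fin R))
    case hi =>
      intro k _
      simp only [Finset.mem_filter, Finset.mem_univ, true_and]
      omega
    case hj =>
      intro x hx
      exact Finset.mem_univ _
    case left_neg =>
      intro k _
      apply Fin.ext
      simp only []
      omega
    case right_neg =>
      intro x hx
      simp only [Finset.mem_filter, Finset.mem_univ, true_and] at hx
      apply Fin.ext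
      simp only []
      omega
    case h =>
      intro k _
      rfl
  have hsplitsum : ∑ j ∈ Finset.univ.filter (fun j : Fin T => T - R ≤ (j : ℕ)), (d ∘ σ) j
      + ∑ j ∈ Finset.univ.filter (fun j : Fin T => (j : ℕ) < T - R), (d ∘ σ) j
      = ∑ j, (d ∘ σ) j := by
    rw [bot_eq_compl]
    exact Finset.sum_add_sum_compl _ _
  have hperm : ∀ f : Fin T → ℝ, ∑ j, f (σ j) = ∑ j, f j := fun f => Equiv.sum_comp σ f
  have htrS : Matrix.trace (Aᵀ * A) = ∑ j, (d ∘ σ) j := by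
    rw [trace_eq_sum_eigs hS, ← hperm d]
    simp [Function.comp]
  have hmu := mu_sum_eq hS R hR
  have hbot : ∑ j ∈ Finset.univ.filter (fun j : Fin T => (j : ℕ) < T - R),
      (hS.eigenvalues ∘ Tuple.sort hS.eigenvalues) j
      = ∑ j ∈ Finset.univ.filter (fun j : Fin T => (j : ℕ) < T - R), (d ∘ σ) j := by
    apply Finset.sum_congr rfl
    intro j _
    rw [hd, hσ]
  rw [trace_ann_split A F, hPS2, htopsum, htrS, hmu, hbot]
  linarith [hsplitsum]

lemma exists_lambda {N T R : ℕ} (A : Matrix (Fin N) (Fin T) ℝ) (F : Matrix (Fin T) (Fin R) ℝ) :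
    ∃ Λ : Matrix (Fin N) (Fin R) ℝ,
      frobSq (A - Λ * Fᵀ) = Matrix.trace (A * annMat F * Aᵀ) := by
  obtain ⟨C, hC⟩ := exists_right_factor F Aᵀ
  refine ⟨Cᵀ, ?_⟩
  have h1 : A * projMat F = Cᵀ * Fᵀ := by
    have h := congrArg Matrix.transpose hC
    rw [Matrix.transpose_mul, Matrix.transpose_mul, Matrix.transpose_transpose,
      projMat_transpose] at h
    exact h
  have h2 : A - Cᵀ * Fᵀ = A * annMat F := by
    rw [← h1, show annMat F = 1 - projMat F from rfl, Matrix.mul_sub, Matrix.mul_one]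
  rw [h2, frobSq_mul_symm_idem A (annMat F) (annMat_transpose F) (annMat_mul_annMat F)]

lemma frobSq_ge {N T R : ℕ} (A : Matrix (Fin N) (Fin T) ℝ) (Λ : Matrix (Fin N) (Fin R) ℝ)
    (F : Matrix (Fin T) (Fin R) ℝ) :
    Matrix.trace (A * annMat F * Aᵀ) ≤ frobSq (A - Λ * Fᵀ) := by
  have h0 : (A - Λ * Fᵀ) * annMat F = A * annMat F := by
    rw [Matrix.sub_mul, Matrix.mul_assoc, transpose_mul_annMat, Matrix.mul_zero, sub_zero]
  calc Matrix.trace (A * annMat F * Aᵀ)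
      = frobSq (A * annMat F) :=
        (frobSq_mul_symm_idem A (annMat F) (annMat_transpose F) (annMat_mul_annMat F)).symm
    _ = frobSq ((A - Λ * Fᵀ) * annMat F) := by rw [h0]
    _ ≤ frobSq (A - Λ * Fᵀ) := frobSq_mul_ann_le _ F

end Statement2Aux

/-- The infimum over Λ ∈ ℝ^{N×R}, F ∈ ℝ^{T×R} of ‖A − ΛF'‖²_HS equals
the infimum over F of Tr(A M_F A'), both equal Σ_{r=R+1}^{T} μ_r(A'A), and both infima
are attained. -/
theorem statement2 {N T : ℕ} (A : Matrix (Fin N) (Fin T) ℝ) (R : ℕ) (hR : R ≤ T) :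
    sInf {x : ℝ | ∃ (Λ : Matrix (Fin N) (Fin R) ℝ) (F : Matrix (Fin T) (Fin R) ℝ),
        x = frobSq (A - Λ * Fᵀ)} =
      sInf {x : ℝ | ∃ F : Matrix (Fin T) (Fin R) ℝ,
        x = Matrix.trace (A * annMat F * Aᵀ)} ∧
    sInf {x : ℝ | ∃ (Λ : Matrix (Fin N) (Fin R) ℝ) (F : Matrix (Fin T) (Fin R) ℝ),
        x = frobSq (A - Λ * Fᵀ)} =
      ∑ r ∈ Finset.Icc (R + 1) T, mu (Aᵀ * A) r ∧
    (∃ (Λ : Matrix (Fin N) (Fin R) ℝ) (F : Matrix (Fin T) (Fin R) ℝ),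
        frobSq (A - Λ * Fᵀ) = ∑ r ∈ Finset.Icc (R + 1) T, mu (Aᵀ * A) r) ∧
    (∃ F : Matrix (Fin T) (Fin R) ℝ,
        Matrix.trace (A * annMat F * Aᵀ) = ∑ r ∈ Finset.Icc (R + 1) T, mu (Aᵀ * A) r) := by
  obtain ⟨F₀, hF₀⟩ := Statement2Aux.attain A hR
  obtain ⟨Λ₀, hΛ₀⟩ := Statement2Aux.exists_lambda A F₀
  have hl1 : IsLeast {x : ℝ | ∃ (Λ : Matrix (Fin N) (Fin R) ℝ) (F : Matrix (Fin T) (Fin R) ℝ),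
      x = frobSq (A - Λ * Fᵀ)} (∑ r ∈ Finset.Icc (R + 1) T, mu (Aᵀ * A) r) := by
    constructor
    · exact ⟨Λ₀, F₀, by rw [hΛ₀, hF₀]⟩
    · rintro x ⟨Λ, F, rfl⟩
      exact le_trans (Statement2Aux.lower_bound A hR F) (Statement2Aux.frobSq_ge A Λ F)
  have hl2 : IsLeast {x : ℝ | ∃ F : Matrix (Fin T) (Fin R) ℝ,
      x = Matrix.trace (A * annMat F * Aᵀ)} (∑ r ∈ Finset.Icc (R + 1) T, mu (Aᵀ * A) r) := by
    constructor
    · exact ⟨F₀, hF₀.symm⟩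
    · rintro x ⟨F, rfl⟩
      exact Statement2Aux.lower_bound A hR F
  refine ⟨?_, ?_, ?_, ?_⟩
  · rw [hl1.csInf_eq, hl2.csInf_eq]
  · exact hl1.csInf_eq
  · exact ⟨Λ₀, F₀, by rw [hΛ₀, hF₀]⟩
  · exact ⟨F₀, hF₀⟩
end

section
/- Let D be a real diagonal n×n matrix, let B be a symmetric n×n matrix whose entries satisfy |B_{ij}| ≤ b for all i, j (with b ≥ 0), and let J denote the n×n all-ones matrix. Then μ_1(D + B) ≤ μ_1(D + bJ). -/
open Matrix MeasureTheory
open scoped BigOperators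

lemma mu_one_def {n : ℕ} {S : Matrix (Fin n) (Fin n) ℝ} (hn : 0 < n) (hS : S.IsHermitian) :
    mu S 1 = hS.eigenvalues (Tuple.sort hS.eigenvalues (Fin.rev ⟨0, hn⟩)) := by
  rw [mu, dif_pos ⟨hS, le_refl 1, hn⟩]; rfl

lemma eigenvalue_le_mu_one {n : ℕ} {S : Matrix (Fin n) (Fin n) ℝ} (hn : 0 < n)
    (hS : S.IsHermitian) (i : Fin n) : hS.eigenvalues i ≤ mu S 1 := by
  rw [mu_one_def hn hS]
  have h1 : hS.eigenvalues i
      = (hS.eigenvalues ∘ Tuple.sort hS.eigenvalues) ((Tuple.sort hS.eigenvalues)⁻¹ i) := by simp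
  rw [h1]
  exact Tuple.monotone_sort hS.eigenvalues (by rw [Fin.le_def]; simp [Fin.rev]; omega)

lemma rayleigh_le {n : ℕ} {S : Matrix (Fin n) (Fin n) ℝ} (hn : 0 < n)
    (hS : S.IsHermitian) (x : Fin n → ℝ) :
    x ⬝ᵥ (S *ᵥ x) ≤ mu S 1 * (x ⬝ᵥ x) := by
  set U : Matrix (Fin n) (Fin n) ℝ := (hS.eigenvectorUnitary : Matrix (Fin n) (Fin n) ℝ) with hU
  set y : Fin n → ℝ := x ᵥ* U with hy
  have hstar : (star U : Matrix (Fin n) (Fin n) ℝ) *ᵥ x = y := by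
    rw [hy, ← mulVec_transpose]
    congr 1
  have hSx : x ⬝ᵥ (S *ᵥ x) = y ⬝ᵥ (diagonal hS.eigenvalues *ᵥ y) := by
    conv_lhs => rw [hS.spectral_theorem, Unitary.conjStarAlgAut_apply]
    rw [← mulVec_mulVec, ← mulVec_mulVec, hstar, dotProduct_mulVec]
    congr 1
  have hyy : y ⬝ᵥ y = x ⬝ᵥ x := by
    rw [hy]
    rw [show (x ᵥ* U) ⬝ᵥ (x ᵥ* U) = x ⬝ᵥ (U *ᵥ (x ᵥ* U)) from (dotProduct_mulVec x U _).symm]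
    rw [← mulVec_transpose, mulVec_mulVec]
    have : U * Uᵀ = 1 := by
      have h2 := (Matrix.mem_unitaryGroup_iff).mp hS.eigenvectorUnitary.2
      simpa [Matrix.star_eq_conjTranspose, Matrix.conjTranspose_eq_transpose_of_trivial] using h2
    rw [this, one_mulVec]
  rw [hSx, ← hyy]
  have hdiag : y ⬝ᵥ (diagonal hS.eigenvalues *ᵥ y) = ∑ i, hS.eigenvalues i * (y i)^2 := by
    simp [dotProduct, mulVec_diagonal]
    ring_nf
    exact Finset.sum_congr rfl fun i _ => by ring
  rw [hdiag]
  have : mu S 1 * (y ⬝ᵥ y) = ∑ i, mu S 1 * (y i)^2 := by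
    simp [dotProduct, Finset.mul_sum]; exact Finset.sum_congr rfl fun i _ => by ring
  rw [this]
  exact Finset.sum_le_sum fun i _ =>
    mul_le_mul_of_nonneg_right (eigenvalue_le_mu_one hn hS i) (sq_nonneg _)

lemma exists_unit_rayleigh {n : ℕ} {S : Matrix (Fin n) (Fin n) ℝ} (hn : 0 < n)
    (hS : S.IsHermitian) :
    ∃ x : Fin n → ℝ, x ⬝ᵥ x = 1 ∧ x ⬝ᵥ (S *ᵥ x) = mu S 1 := by
  set i0 := Tuple.sort hS.eigenvalues (Fin.rev ⟨0, hn⟩) with hi0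
  refine ⟨⇑(hS.eigenvectorBasis i0), ?_, ?_⟩
  · have h1 : ‖hS.eigenvectorBasis i0‖ = 1 := hS.eigenvectorBasis.orthonormal.1 i0
    have h2 : (inner (𝕜 := ℝ) (hS.eigenvectorBasis i0) (hS.eigenvectorBasis i0)) = 1 := by
      rw [real_inner_self_eq_norm_mul_norm, h1]; ring
    rw [← h2, EuclideanSpace.inner_eq_star_dotProduct]
    simp [dotProduct]
  · rw [hS.mulVec_eigenvectorBasis i0]
    have h1 : ‖hS.eigenvectorBasis i0‖ = 1 := hS.eigenvectorBasis.orthonormal.1 i0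
    have h2 : (inner (𝕜 := ℝ) (hS.eigenvectorBasis i0) (hS.eigenvectorBasis i0)) = 1 := by
      rw [real_inner_self_eq_norm_mul_norm, h1]; ring
    have h3 : (⇑(hS.eigenvectorBasis i0) : Fin n → ℝ) ⬝ᵥ ⇑(hS.eigenvectorBasis i0) = 1 := by
      rw [← h2, EuclideanSpace.inner_eq_star_dotProduct]; simp [dotProduct]
    rw [dotProduct_smul, smul_eq_mul]
    rw [show ((⇑(hS.eigenvectorBasis i0) : Fin n → ℝ) ⬝ᵥ ⇑(hS.eigenvectorBasis i0)) = 1 from h3]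
    rw [mu_one_def hn hS]
    ring

/-- If D is diagonal, B is symmetric with |B_{ij}| ≤ b (b ≥ 0), and
J is the all-ones matrix, then μ_1(D+B) ≤ μ_1(D+bJ). -/
theorem statement10 {n : ℕ} (D B : Matrix (Fin n) (Fin n) ℝ) (b : ℝ)
    (hD : D.IsDiag) (hB : B.IsHermitian) (hb : 0 ≤ b)
    (hBb : ∀ i j, |B i j| ≤ b) :
    mu (D + B) 1 ≤ mu (D + b • Matrix.of fun (_ _ : Fin n) => (1 : ℝ)) 1 := by
  rcases Nat.eq_zero_or_pos n with h0 | hn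
  · subst h0
    rw [mu, mu, dif_neg (by rintro ⟨-, -, h⟩; omega), dif_neg (by rintro ⟨-, -, h⟩; omega)]
  · have hDh : D.IsHermitian := by
      rw [Matrix.IsHermitian]
      ext i j
      rw [conjTranspose_apply, star_trivial]
      by_cases h : i = j
      · subst h; rfl
      · rw [hD h, hD (Ne.symm h)]
    have hJh : (b • Matrix.of fun (_ _ : Fin n) => (1 : ℝ)).IsHermitian := by
      rw [Matrix.IsHermitian]
      ext i j
      simp
    have hS1 : (D + B).IsHermitian := hDh.add hB
    have hS2 : (D + b • Matrix.of fun (_ _ : Fin n) => (1 : ℝ)).IsHermitian := hDh.add hJh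
    obtain ⟨x, hx1, hx2⟩ := exists_unit_rayleigh hn hS1
    set y : Fin n → ℝ := fun i => |x i| with hy
    have hyy : y ⬝ᵥ y = 1 := by
      rw [← hx1]
      simp only [dotProduct, hy]
      exact Finset.sum_congr rfl fun i _ => abs_mul_abs_self (x i)
    have expand : ∀ (M : Matrix (Fin n) (Fin n) ℝ) (v : Fin n → ℝ),
        v ⬝ᵥ (M *ᵥ v) = ∑ i, ∑ j, v i * M i j * v j := by
      intro M v
      simp [dotProduct, mulVec, Finset.mul_sum, mul_assoc]
    have key : x ⬝ᵥ ((D + B) *ᵥ x)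
        ≤ y ⬝ᵥ ((D + b • Matrix.of fun (_ _ : Fin n) => (1 : ℝ)) *ᵥ y) := by
      rw [expand, expand]
      refine Finset.sum_le_sum fun i _ => Finset.sum_le_sum fun j _ => ?_
      have hDterm : x i * D i j * x j = y i * D i j * y j := by
        by_cases h : i = j
        · subst h
          simp only [hy]
          rcases abs_choice (x i) with h' | h' <;> rw [h'] <;> ring
        · rw [hD h]; ring
      have hBterm : x i * B i j * x j ≤ y i * b * y j := by
        calc x i * B i j * x j ≤ |x i * B i j * x j| := le_abs_self _
          _ = |x i| * |B i j| * |x j| := by rw [abs_mul, abs_mul]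
          _ ≤ |x i| * b * |x j| :=
            mul_le_mul_of_nonneg_right
              (mul_le_mul_of_nonneg_left (hBb i j) (abs_nonneg _)) (abs_nonneg _)
          _ = y i * b * y j := rfl
      have hlhs : x i * (D + B) i j * x j = x i * D i j * x j + x i * B i j * x j := by
        simp [Matrix.add_apply]; ring
      have hrhs : y i * (D + b • Matrix.of fun (_ _ : Fin n) => (1 : ℝ)) i j * y j
          = y i * D i j * y j + y i * b * y j := by
        simp [Matrix.add_apply, Matrix.smul_apply]; ring
      rw [hlhs, hrhs]
      linarith
    calc mu (D + B) 1 = x ⬝ᵥ ((D + B) *ᵥ x) := hx2.symm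
      _ ≤ y ⬝ᵥ ((D + b • Matrix.of fun (_ _ : Fin n) => (1 : ℝ)) *ᵥ y) := key
      _ ≤ mu (D + b • Matrix.of fun (_ _ : Fin n) => (1 : ℝ)) 1 * (y ⬝ᵥ y) :=
        rayleigh_le hn hS2 y
      _ = _ := by rw [hyy, mul_one]
end

section
/- Let A and B be symmetric n×n matrices. Let ν_1,…,ν_n be orthonormal eigenvectors of A with A ν_i = μ_i(A) ν_i and μ_1(A) ≥ … ≥ μ_n(A), let ν̃_1,…,ν̃_n be orthonormal eigenvectors of A+B with (A+B) ν̃_i = μ_i(A+B) ν̃_i, and set b = max_{i,j=1,…,n} |ν_i' B ν_j|. Let R < n and suppose that |μ_r(A+B) − μ_r(A)| ≤ c₁ for all r ∈ {1,…,R+1} and that μ_r(A) − μ_{r+1}(A) ≥ c₂ > 0 for all r ∈ {1,…,R}. Then for every r ∈ {1,…,R} one has 1 − (ν_r' ν̃_r)² ≤ (4^r − 1)(b + c₁)/(3 c₂); consequently, if additionally ν_r' ν̃_r ≥ 0, then ‖ν̃_r − ν_r‖² ≤ 2(4^r − 1)(b + c₁)/(3 c₂). -/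
open Matrix MeasureTheory
open scoped BigOperators

section S12Aux
open Matrix


lemma s12_sum_Icc_eq_sum_fin {n : ℕ} (f : ℕ → ℝ) :
    ∑ m ∈ Finset.Icc 1 n, f m = ∑ a : Fin n, f (a.1 + 1) := by
  rw [← Finset.Ico_add_one_right_eq_Icc, Finset.sum_Ico_eq_sum_range]
  rw [Fin.sum_univ_eq_sum_range (fun i => f (i + 1)) n]
  simp [add_comm]

lemma s12_col_ortho {n : ℕ} (w : ℕ → Fin n → ℝ)
    (h : ∀ i ∈ Finset.Icc 1 n, ∀ j ∈ Finset.Icc 1 n,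
      w i ⬝ᵥ w j = if i = j then (1 : ℝ) else 0) (a c : Fin n) :
    ∑ m ∈ Finset.Icc 1 n, w m a * w m c = if a = c then (1:ℝ) else 0 := by
  classical
  set M : Matrix (Fin n) (Fin n) ℝ := Matrix.of (fun i j => w (i.1 + 1) j) with hM
  have hmem : ∀ i : Fin n, i.1 + 1 ∈ Finset.Icc 1 n := by
    intro i; simp [Finset.mem_Icc]
  have h1 : M * Mᵀ = 1 := by
    ext i j
    simp only [Matrix.mul_apply, Matrix.transpose_apply, Matrix.one_apply, hM, Matrix.of_apply]
    have := h _ (hmem i) _ (hmem j)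
    simp only [dotProduct] at this
    rw [this]
    have : (i.1 + 1 = j.1 + 1) ↔ (i = j) := by
      constructor
      · intro hh; exact Fin.ext (by omega)
      · intro hh; rw [hh]
    simp [this, Fin.val_inj]
  have h2 : Mᵀ * M = 1 := mul_eq_one_comm.mp h1
  have := congrFun (congrFun h2 a) c
  simp only [Matrix.mul_apply, Matrix.transpose_apply, Matrix.one_apply, hM, Matrix.of_apply] at this
  rw [s12_sum_Icc_eq_sum_fin (fun m => w m a * w m c)]
  exact this

lemma s12_parseval {n : ℕ} (w : ℕ → Fin n → ℝ)
    (h : ∀ i ∈ Finset.Icc 1 n, ∀ j ∈ Finset.Icc 1 n,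
      w i ⬝ᵥ w j = if i = j then (1 : ℝ) else 0) (x y : Fin n → ℝ) :
    ∑ m ∈ Finset.Icc 1 n, (x ⬝ᵥ w m) * (y ⬝ᵥ w m) = x ⬝ᵥ y := by
  classical
  have : ∀ m, (x ⬝ᵥ w m) * (y ⬝ᵥ w m) = ∑ a : Fin n, ∑ c : Fin n, x a * y c * (w m a * w m c) := by
    intro m
    simp only [dotProduct, Finset.sum_mul_sum]
    apply Finset.sum_congr rfl; intro a _; apply Finset.sum_congr rfl; intro c _; ring
  rw [Finset.sum_congr rfl (fun m _ => this m)]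
  rw [Finset.sum_comm]
  have : ∀ a : Fin n, ∑ m ∈ Finset.Icc 1 n, ∑ c : Fin n, x a * y c * (w m a * w m c)
      = ∑ c : Fin n, x a * y c * (if a = c then (1:ℝ) else 0) := by
    intro a
    rw [Finset.sum_comm]
    apply Finset.sum_congr rfl
    intro c _
    rw [← Finset.mul_sum, s12_col_ortho w h a c]
  rw [Finset.sum_congr rfl (fun a _ => this a)]
  simp [dotProduct, mul_ite]

lemma s12_quadform {n : ℕ} (S : Matrix (Fin n) (Fin n) ℝ) (hS : S.IsHermitian)
    (w : ℕ → Fin n → ℝ) (μ : ℕ → ℝ)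
    (h : ∀ i ∈ Finset.Icc 1 n, ∀ j ∈ Finset.Icc 1 n,
      w i ⬝ᵥ w j = if i = j then (1 : ℝ) else 0)
    (he : ∀ i ∈ Finset.Icc 1 n, S.mulVec (w i) = μ i • w i)
    (x : Fin n → ℝ) :
    x ⬝ᵥ S.mulVec x = ∑ m ∈ Finset.Icc 1 n, μ m * (x ⬝ᵥ w m)^2 := by
  have hsymm : Sᵀ = S := by
    have := hS.eq
    rwa [Matrix.conjTranspose_eq_transpose_of_trivial] at this
  rw [← s12_parseval w h x (S.mulVec x)]
  apply Finset.sum_congr rfl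
  intro m hm
  have : S.mulVec x ⬝ᵥ w m = μ m * (x ⬝ᵥ w m) := by
    rw [dotProduct_comm, dotProduct_mulVec, ← hsymm, vecMul_transpose, he m hm,
      smul_dotProduct, dotProduct_comm]
    simp
  rw [this]; ring

lemma s12_mu_antitone {n : ℕ} (S : Matrix (Fin n) (Fin n) ℝ) {i j : ℕ}
    (h1 : 1 ≤ i) (hij : i ≤ j) (hj : j ≤ n) : mu S j ≤ mu S i := by
  unfold mu
  by_cases hH : S.IsHermitian
  · rw [dif_pos ⟨hH, by omega, hj⟩, dif_pos ⟨hH, h1, by omega⟩]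
    apply Tuple.monotone_sort
    rw [Fin.rev_le_rev]
    exact Fin.mk_le_mk.mpr (by omega)
  · rw [dif_neg (fun h => hH h.1), dif_neg (fun h => hH h.1)]

lemma s12_arith (r : ℕ) (hr : 1 ≤ r) :
    (∑ m ∈ Finset.Ico 1 r, ((4:ℝ)^m - 1)) + 3*r ≤ 4^r - 1 := by
  induction r with
  | zero => omega
  | succ k ih =>
    rcases Nat.eq_or_lt_of_le hr with h | h
    · simp [← h]; norm_num
    · have hk : 1 ≤ k := by omega
      have := ih hk
      rw [Finset.sum_Ico_succ_top hk]
      have h4 : (1:ℝ) ≤ 4^k := one_le_pow₀ (by norm_num)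
      push_cast
      rw [pow_succ]
      nlinarith

lemma s12_main_bound {n : ℕ} (A B : Matrix (Fin n) (Fin n) ℝ)
    (hA : A.IsHermitian) (hB : B.IsHermitian)
    (ν νt : ℕ → (Fin n → ℝ))
    (hortho : ∀ i ∈ Finset.Icc 1 n, ∀ j ∈ Finset.Icc 1 n,
      ν i ⬝ᵥ ν j = if i = j then (1 : ℝ) else 0)
    (heig : ∀ i ∈ Finset.Icc 1 n, A.mulVec (ν i) = mu A i • ν i)
    (horthot : ∀ i ∈ Finset.Icc 1 n, ∀ j ∈ Finset.Icc 1 n,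
      νt i ⬝ᵥ νt j = if i = j then (1 : ℝ) else 0)
    (heigt : ∀ i ∈ Finset.Icc 1 n, (A + B).mulVec (νt i) = mu (A + B) i • νt i)
    (b : ℝ)
    (hb : IsGreatest {x : ℝ | ∃ i ∈ Finset.Icc 1 n, ∃ j ∈ Finset.Icc 1 n,
      x = |ν i ⬝ᵥ B.mulVec (ν j)|} b)
    (R : ℕ) (hR : R < n)
    (c₁ c₂ : ℝ) (hc₂ : 0 < c₂)
    (hc₁ : ∀ r ∈ Finset.Icc 1 (R + 1), |mu (A + B) r - mu A r| ≤ c₁)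
    (hgap : ∀ r ∈ Finset.Icc 1 R, c₂ ≤ mu A r - mu A (r + 1)) :
    ∀ r ∈ Finset.Icc 1 R,
      1 - (ν r ⬝ᵥ νt r) ^ 2 ≤ ((4 : ℝ) ^ r - 1) * (b + c₁) / (3 * c₂) := by
  intro r
  induction r using Nat.strong_induction_on with
  | _ r ih =>
  intro hr
  obtain ⟨hr1, hrR⟩ := Finset.mem_Icc.mp hr
  have hrn : r < n := lt_of_le_of_lt hrR hR
  -- nonnegativity of b and c₁
  have hc₁0 : 0 ≤ c₁ := le_trans (abs_nonneg _)
    (hc₁ 1 (Finset.mem_Icc.mpr ⟨le_refl 1, by omega⟩))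
  have hb0 : 0 ≤ b := by
    obtain ⟨i, hi, j, hj, hbe⟩ := hb.1
    rw [hbe]; exact abs_nonneg _
  have hq0 : 0 ≤ b + c₁ := by linarith
  -- membership helpers
  have hmem : ∀ k, 1 ≤ k → k ≤ n → k ∈ Finset.Icc 1 n := by
    intro k h1 h2; exact Finset.mem_Icc.mpr ⟨h1, h2⟩
  have hsub : Finset.Ioc 0 r ⊆ Finset.Icc 1 n := by
    intro k hk; rw [Finset.mem_Ioc] at hk; exact hmem k hk.1 (by omega)
  -- column sums
  have colsum : ∀ m, 1 ≤ m → m ≤ n →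
      ∑ k ∈ Finset.Icc 1 n, (ν k ⬝ᵥ νt m)^2 = 1 := by
    intro m h1 h2
    have := s12_parseval ν hortho (νt m) (νt m)
    rw [horthot m (hmem m h1 h2) m (hmem m h1 h2), if_pos rfl] at this
    rw [← this]
    apply Finset.sum_congr rfl
    intro k _
    rw [dotProduct_comm]; ring
  -- row sums
  have rowsum : ∀ k, 1 ≤ k → k ≤ n →
      ∑ m ∈ Finset.Icc 1 n, (ν k ⬝ᵥ νt m)^2 = 1 := by
    intro k h1 h2
    have := s12_parseval νt horthot (ν k) (ν k)
    rw [hortho k (hmem k h1 h2) k (hmem k h1 h2), if_pos rfl] at this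
    rw [← this]
    apply Finset.sum_congr rfl
    intro m _; ring
  -- quadratic form identity
  have quad : ∀ k, 1 ≤ k → k ≤ n →
      ∑ m ∈ Finset.Icc 1 n, mu (A+B) m * (ν k ⬝ᵥ νt m)^2
        = mu A k + ν k ⬝ᵥ B.mulVec (ν k) := by
    intro k h1 h2
    rw [← s12_quadform (A+B) (hA.add hB) νt (mu (A+B)) horthot heigt (ν k)]
    rw [Matrix.add_mulVec, dotProduct_add, heig k (hmem k h1 h2), dotProduct_smul,
      hortho k (hmem k h1 h2) k (hmem k h1 h2), if_pos rfl]
    simp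
  have Mkk : ∀ k, 1 ≤ k → k ≤ n → -b ≤ ν k ⬝ᵥ B.mulVec (ν k) := by
    intro k h1 h2
    have := hb.2 ⟨k, hmem k h1 h2, k, hmem k h1 h2, rfl⟩
    have h3 := abs_le.mp this
    linarith [h3.1, neg_abs_le (ν k ⬝ᵥ B.mulVec (ν k))]

  -- beta facts
  have beta_nonneg : ∀ m, 0 ≤ ∑ k ∈ Finset.Ioc 0 r, (ν k ⬝ᵥ νt m)^2 := by
    intro m; exact Finset.sum_nonneg (fun k _ => sq_nonneg _)
  have beta_le_one : ∀ m, 1 ≤ m → m ≤ n →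
      ∑ k ∈ Finset.Ioc 0 r, (ν k ⬝ᵥ νt m)^2 ≤ 1 := by
    intro m h1 h2
    rw [← colsum m h1 h2]
    exact Finset.sum_le_sum_of_subset_of_nonneg hsub (fun k _ _ => sq_nonneg _)
  -- total beta sum = r
  have sumbeta : ∑ m ∈ Finset.Icc 1 n, ∑ k ∈ Finset.Ioc 0 r, (ν k ⬝ᵥ νt m)^2 = r := by
    rw [Finset.sum_comm]
    rw [Finset.sum_congr rfl (fun k hk => rowsum k (Finset.mem_Ioc.mp hk).1
      (by have := (Finset.mem_Ioc.mp hk).2; omega))]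
    simp [Nat.card_Ioc]
  -- split of Icc 1 n sums at r
  have hsplit : ∀ f : ℕ → ℝ, ∑ m ∈ Finset.Icc 1 n, f m
      = ∑ m ∈ Finset.Ioc 0 r, f m + ∑ m ∈ Finset.Ioc r n, f m := by
    intro f
    rw [show Finset.Icc 1 n = Finset.Ioc 0 n from Finset.Icc_add_one_left_eq_Ioc 0 n]
    rw [Finset.sum_Ioc_consecutive f (Nat.zero_le r) (le_of_lt hrn)]
  -- shorthand
  set D : ℝ := ∑ m ∈ Finset.Ioc r n, ∑ k ∈ Finset.Ioc 0 r, (ν k ⬝ᵥ νt m)^2 with hD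
  have hD0 : 0 ≤ D := Finset.sum_nonneg (fun m _ => beta_nonneg m)
  have hSb : ∑ m ∈ Finset.Ioc 0 r, ∑ k ∈ Finset.Ioc 0 r, (ν k ⬝ᵥ νt m)^2 = r - D := by
    have := sumbeta
    rw [hsplit (fun m => ∑ k ∈ Finset.Ioc 0 r, (ν k ⬝ᵥ νt m)^2)] at this
    linarith
  -- KEY: D * c₂ ≤ r * q
  have key : D * c₂ ≤ r * (b + c₁) := by
    have lower : (∑ k ∈ Finset.Ioc 0 r, mu A k) - r*b
        ≤ ∑ k ∈ Finset.Ioc 0 r, (mu A k + ν k ⬝ᵥ B.mulVec (ν k)) := by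
      rw [Finset.sum_add_distrib]
      have : (-(r*b) : ℝ) = ∑ k ∈ Finset.Ioc 0 r, (-b : ℝ) := by
        simp only [Finset.sum_const, Nat.card_Ioc, Nat.sub_zero, nsmul_eq_mul]
        ring
      have h2 : ∑ k ∈ Finset.Ioc 0 r, (-b:ℝ)
          ≤ ∑ k ∈ Finset.Ioc 0 r, ν k ⬝ᵥ B.mulVec (ν k) := by
        apply Finset.sum_le_sum
        intro k hk
        obtain ⟨hk1, hk2⟩ := Finset.mem_Ioc.mp hk
        exact Mkk k hk1 (by omega)
      linarith
    have Seq : ∑ k ∈ Finset.Ioc 0 r, (mu A k + ν k ⬝ᵥ B.mulVec (ν k))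
        = ∑ m ∈ Finset.Icc 1 n, mu (A+B) m * ∑ k ∈ Finset.Ioc 0 r, (ν k ⬝ᵥ νt m)^2 := by
      rw [Finset.sum_congr rfl (fun k hk => (quad k (Finset.mem_Ioc.mp hk).1
        (by have := (Finset.mem_Ioc.mp hk).2; omega)).symm)]
      rw [Finset.sum_comm]
      apply Finset.sum_congr rfl
      intro m _
      rw [Finset.mul_sum]
    have upper : ∑ m ∈ Finset.Icc 1 n, mu (A+B) m * ∑ k ∈ Finset.Ioc 0 r, (ν k ⬝ᵥ νt m)^2
        ≤ (∑ m ∈ Finset.Ioc 0 r, mu A m) - D*(mu A r) + (r-D)*c₁ + D*(mu A (r+1) + c₁) := by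
      rw [hsplit (fun m => mu (A+B) m * ∑ k ∈ Finset.Ioc 0 r, (ν k ⬝ᵥ νt m)^2)]
      have headle : ∑ m ∈ Finset.Ioc 0 r, mu (A+B) m * ∑ k ∈ Finset.Ioc 0 r, (ν k ⬝ᵥ νt m)^2
          ≤ ∑ m ∈ Finset.Ioc 0 r, (mu A m - (1 - ∑ k ∈ Finset.Ioc 0 r, (ν k ⬝ᵥ νt m)^2) * mu A r
              + (∑ k ∈ Finset.Ioc 0 r, (ν k ⬝ᵥ νt m)^2) * c₁) := by
        apply Finset.sum_le_sum
        intro m hm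
        obtain ⟨hm1, hm2⟩ := Finset.mem_Ioc.mp hm
        have hβ0 := beta_nonneg m
        have hβ1 := beta_le_one m hm1 (by omega)
        have hmu : mu (A+B) m ≤ mu A m + c₁ := by
          have := abs_le.mp (hc₁ m (Finset.mem_Icc.mpr ⟨hm1, by omega⟩))
          linarith [this.2]
        have hmono : mu A r ≤ mu A m := s12_mu_antitone A hm1 hm2 (le_of_lt hrn)
        nlinarith [hβ0, hβ1, hmu, hmono]
      have taille : ∑ m ∈ Finset.Ioc r n, mu (A+B) m * ∑ k ∈ Finset.Ioc 0 r, (ν k ⬝ᵥ νt m)^2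
          ≤ D * (mu A (r+1) + c₁) := by
        rw [hD, Finset.sum_mul]
        apply Finset.sum_le_sum
        intro m hm
        obtain ⟨hm1, hm2⟩ := Finset.mem_Ioc.mp hm
        have hβ0 := beta_nonneg m
        have hmu1 : mu (A+B) m ≤ mu (A+B) (r+1) := s12_mu_antitone (A+B) (by omega) (by omega) hm2
        have hmu2 : mu (A+B) (r+1) ≤ mu A (r+1) + c₁ := by
          have := abs_le.mp (hc₁ (r+1) (Finset.mem_Icc.mpr ⟨by omega, by omega⟩))
          linarith [this.2]
        nlinarith [hβ0]
      have headeq : ∑ m ∈ Finset.Ioc 0 r, (mu A m - (1 - ∑ k ∈ Finset.Ioc 0 r, (ν k ⬝ᵥ νt m)^2) * mu A r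
              + (∑ k ∈ Finset.Ioc 0 r, (ν k ⬝ᵥ νt m)^2) * c₁)
          = (∑ m ∈ Finset.Ioc 0 r, mu A m) - D*(mu A r) + (r-D)*c₁ := by
        rw [Finset.sum_add_distrib, Finset.sum_sub_distrib, ← Finset.sum_mul, ← Finset.sum_mul]
        rw [Finset.sum_sub_distrib, hSb]
        simp only [Finset.sum_const, Nat.card_Ioc, Nat.sub_zero, nsmul_eq_mul]
        ring
      rw [headeq] at headle
      linarith
    have hgapr := hgap r (Finset.mem_Icc.mpr ⟨hr1, hrR⟩)
    have chain : (∑ k ∈ Finset.Ioc 0 r, mu A k) - r*b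
        ≤ (∑ m ∈ Finset.Ioc 0 r, mu A m) - D*(mu A r) + (r-D)*c₁ + D*(mu A (r+1) + c₁) := by
      calc (∑ k ∈ Finset.Ioc 0 r, mu A k) - r*b
          ≤ ∑ k ∈ Finset.Ioc 0 r, (mu A k + ν k ⬝ᵥ B.mulVec (ν k)) := lower
        _ = _ := Seq
        _ ≤ _ := upper
    have : D * (mu A r - mu A (r+1)) ≤ r * (b + c₁) := by nlinarith [chain]
    nlinarith [mul_le_mul_of_nonneg_left hgapr hD0]
  -- tail bound
  have tail_le : ∑ m ∈ Finset.Ioc r n, (ν r ⬝ᵥ νt m)^2 ≤ D := by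
    rw [hD]
    apply Finset.sum_le_sum
    intro m _
    exact Finset.single_le_sum (f := fun k => (ν k ⬝ᵥ νt m)^2)
      (fun k _ => sq_nonneg _) (by simp only [Finset.mem_Ioc]; omega)
  -- head bound via induction hypothesis
  have head_le : ∑ m ∈ Finset.Ico 1 r, (ν r ⬝ᵥ νt m)^2
      ≤ ∑ m ∈ Finset.Ico 1 r, ((4:ℝ)^m - 1) * ((b + c₁) / (3 * c₂)) := by
    apply Finset.sum_le_sum
    intro m hm
    obtain ⟨hm1, hm2⟩ := Finset.mem_Ico.mp hm
    have hmn : m ≤ n := by omega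
    have step1 : (ν r ⬝ᵥ νt m)^2 + (ν m ⬝ᵥ νt m)^2 ≤ 1 := by
      rw [← colsum m hm1 hmn]
      have hps : ({r, m} : Finset ℕ) ⊆ Finset.Icc 1 n := by
        intro k hk
        rcases Finset.mem_insert.mp hk with h | h
        · rw [h]; exact hmem r hr1 (by omega)
        · rw [Finset.mem_singleton.mp h]; exact hmem m hm1 hmn
      have := Finset.sum_le_sum_of_subset_of_nonneg hps
        (fun k _ _ => sq_nonneg (ν k ⬝ᵥ νt m))
      rwa [Finset.sum_pair (by omega : r ≠ m)] at this
    have step2 := ih m hm2 (Finset.mem_Icc.mpr ⟨hm1, by omega⟩)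
    rw [← mul_div_assoc]
    linarith
  -- decomposition of 1 - (g r r)^2
  have decomp : 1 - (ν r ⬝ᵥ νt r)^2
      = ∑ m ∈ Finset.Ico 1 r, (ν r ⬝ᵥ νt m)^2 + ∑ m ∈ Finset.Ioc r n, (ν r ⬝ᵥ νt m)^2 := by
    have hrs := rowsum r hr1 (le_of_lt hrn)
    rw [hsplit (fun m => (ν r ⬝ᵥ νt m)^2)] at hrs
    have hIoc : Finset.Ioc 0 r = insert r (Finset.Ico 1 r) := by
      ext k
      simp only [Finset.mem_Ioc, Finset.mem_insert, Finset.mem_Ico]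
      omega
    rw [hIoc, Finset.sum_insert (by simp [Finset.mem_Ico])] at hrs
    linarith
  -- final arithmetic
  have harith := s12_arith r hr1
  have ht0 : (0:ℝ) ≤ (b + c₁) / (3 * c₂) := by positivity
  have hKsum := mul_le_mul_of_nonneg_right harith ht0
  rw [add_mul, Finset.sum_mul] at hKsum
  have hDq : D ≤ 3 * (r:ℝ) * ((b + c₁) / (3 * c₂)) := by
    rw [show (3:ℝ) * (r:ℝ) * ((b + c₁) / (3 * c₂)) = (r * (b + c₁))/c₂ by
      field_simp]
    rw [le_div_iff₀ hc₂]
    exact key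
  rw [decomp, mul_div_assoc]
  linarith [head_le, le_trans tail_le hDq, hKsum]

end S12Aux

/-- eigenvector perturbation bound. With A, B symmetric, ν (resp. ν̃)
orthonormal eigenvectors of A (resp. A+B) for the decreasingly ordered eigenvalues,
b = max_{i,j} |ν_i' B ν_j|, R < n, |μ_r(A+B) − μ_r(A)| ≤ c₁ for r ≤ R+1 and
μ_r(A) − μ_{r+1}(A) ≥ c₂ > 0 for r ≤ R: for each r ∈ {1,…,R},
1 − (ν_r'ν̃_r)² ≤ (4^r − 1)(b+c₁)/(3c₂); if moreover ν_r'ν̃_r ≥ 0 then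
‖ν̃_r − ν_r‖² ≤ 2(4^r − 1)(b+c₁)/(3c₂). -/
theorem statement12 {n : ℕ} (A B : Matrix (Fin n) (Fin n) ℝ)
    (hA : A.IsHermitian) (hB : B.IsHermitian)
    (ν νt : ℕ → (Fin n → ℝ))
    (hortho : ∀ i ∈ Finset.Icc 1 n, ∀ j ∈ Finset.Icc 1 n,
      ν i ⬝ᵥ ν j = if i = j then (1 : ℝ) else 0)
    (heig : ∀ i ∈ Finset.Icc 1 n, A.mulVec (ν i) = mu A i • ν i)
    (horthot : ∀ i ∈ Finset.Icc 1 n, ∀ j ∈ Finset.Icc 1 n,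
      νt i ⬝ᵥ νt j = if i = j then (1 : ℝ) else 0)
    (heigt : ∀ i ∈ Finset.Icc 1 n, (A + B).mulVec (νt i) = mu (A + B) i • νt i)
    (b : ℝ)
    (hb : IsGreatest {x : ℝ | ∃ i ∈ Finset.Icc 1 n, ∃ j ∈ Finset.Icc 1 n,
      x = |ν i ⬝ᵥ B.mulVec (ν j)|} b)
    (R : ℕ) (hR : R < n)
    (c₁ c₂ : ℝ) (hc₂ : 0 < c₂)
    (hc₁ : ∀ r ∈ Finset.Icc 1 (R + 1), |mu (A + B) r - mu A r| ≤ c₁)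
    (hgap : ∀ r ∈ Finset.Icc 1 R, c₂ ≤ mu A r - mu A (r + 1)) :
    ∀ r ∈ Finset.Icc 1 R,
      1 - (ν r ⬝ᵥ νt r) ^ 2 ≤ ((4 : ℝ) ^ r - 1) * (b + c₁) / (3 * c₂) ∧
      (0 ≤ ν r ⬝ᵥ νt r →
        ∑ i : Fin n, (νt r i - ν r i) ^ 2 ≤ 2 * ((4 : ℝ) ^ r - 1) * (b + c₁) / (3 * c₂)) := by
  intro r hr
  have h1 := s12_main_bound A B hA hB ν νt hortho heig horthot heigt b hb R hR c₁ c₂ hc₂ hc₁ hgap r hr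
  obtain ⟨hr1, hrR⟩ := Finset.mem_Icc.mp hr
  have hrIcc : r ∈ Finset.Icc 1 n := Finset.mem_Icc.mpr ⟨hr1, by omega⟩
  refine ⟨h1, ?_⟩
  intro hg
  -- (ν r ⬝ᵥ νt r)^2 ≤ 1
  have hrow := s12_parseval νt horthot (ν r) (ν r)
  rw [hortho r hrIcc r hrIcc, if_pos rfl] at hrow
  have hgsq : (ν r ⬝ᵥ νt r)^2 ≤ 1 := by
    rw [← hrow]
    have := Finset.single_le_sum (f := fun m => (ν r ⬝ᵥ νt m) * (ν r ⬝ᵥ νt m))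
      (fun m _ => mul_self_nonneg _) hrIcc
    calc (ν r ⬝ᵥ νt r)^2 = (ν r ⬝ᵥ νt r) * (ν r ⬝ᵥ νt r) := sq (ν r ⬝ᵥ νt r) ▸ by ring
      _ ≤ _ := this
  have hg1 : ν r ⬝ᵥ νt r ≤ 1 := by nlinarith
  -- norm expansion
  have hexp : ∑ i : Fin n, (νt r i - ν r i)^2 = 2 - 2*(ν r ⬝ᵥ νt r) := by
    have hnt : ∑ i : Fin n, νt r i * νt r i = 1 := by
      have := horthot r hrIcc r hrIcc
      rw [if_pos rfl] at this
      simpa [dotProduct] using this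
    have hn : ∑ i : Fin n, ν r i * ν r i = 1 := by
      have := hortho r hrIcc r hrIcc
      rw [if_pos rfl] at this
      simpa [dotProduct] using this
    have hcross : ∑ i : Fin n, νt r i * ν r i = ν r ⬝ᵥ νt r := by
      rw [dotProduct_comm]
      simp [dotProduct]
    have expand : ∀ i : Fin n, (νt r i - ν r i)^2
        = νt r i * νt r i - 2*(νt r i * ν r i) + ν r i * ν r i := fun i => by ring
    rw [Finset.sum_congr rfl (fun i _ => expand i), Finset.sum_add_distrib,
      Finset.sum_sub_distrib, ← Finset.mul_sum, hnt, hn, hcross]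
    ring
  have h2X : 2 * ((4:ℝ)^r - 1) * (b + c₁) / (3 * c₂)
      = 2 * (((4:ℝ)^r - 1) * (b + c₁) / (3 * c₂)) := by ring
  rw [hexp, h2X]
  nlinarith [hg, hg1, h1]
end

section
/- Let κ ≥ 1 and 0 < ε ≤ (1/2)^{1/3} be real numbers and set a = ε²/κ². Define g(a,κ) = (1/2)·[1 + κ² + κ/√a + sqrt((1 + κ² + κ/√a)² − 4κ²)] (the expression under the square root is nonnegative since 1 + κ² ≥ 2κ). Then g(a,κ) − ((1 + a²)/√a)·κ − κ² > 0. -/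
set_option maxHeartbeats 1000000


/-- the inequality h₁(a,κ) > 0 from the counter-example analysis.
For κ ≥ 1 and 0 < ε ≤ (1/2)^{1/3}, with a = ε²/κ² and
g(a,κ) = (1/2)[1 + κ² + κ/√a + √((1 + κ² + κ/√a)² − 4κ²)], one has
g(a,κ) − ((1 + a²)/√a)·κ − κ² > 0. -/
theorem statement14 (κ ε : ℝ) (hκ : 1 ≤ κ) (hε : 0 < ε)
    (hε2 : ε ≤ (1 / 2 : ℝ) ^ ((1 : ℝ) / 3)) :
    0 < (1 / 2 : ℝ) * (1 + κ ^ 2 + κ / Real.sqrt (ε ^ 2 / κ ^ 2) +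
          Real.sqrt ((1 + κ ^ 2 + κ / Real.sqrt (ε ^ 2 / κ ^ 2)) ^ 2 - 4 * κ ^ 2))
        - ((1 + (ε ^ 2 / κ ^ 2) ^ 2) / Real.sqrt (ε ^ 2 / κ ^ 2)) * κ - κ ^ 2 := by
  have hκ0 : (0:ℝ) < κ := lt_of_lt_of_le one_pos hκ
  have hs : Real.sqrt (ε ^ 2 / κ ^ 2) = ε / κ := by
    rw [show ε ^ 2 / κ ^ 2 = (ε / κ) ^ 2 by ring, Real.sqrt_sq (by positivity)]
  rw [hs]
  have hε3 : ε ^ 3 ≤ 1 / 2 := by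
    calc ε ^ 3 ≤ ((1 / 2 : ℝ) ^ ((1 : ℝ) / 3)) ^ 3 := by
          exact pow_le_pow_left₀ hε.le hε2 3
      _ = 1 / 2 := by
          rw [← Real.rpow_natCast ((1/2:ℝ) ^ ((1:ℝ)/3)) 3, ← Real.rpow_mul (by norm_num)]
          norm_num
  have hε1 : ε < 1 := by nlinarith [sq_nonneg ε, sq_nonneg (ε - 1), sq_nonneg (ε + 1)]
  have hA : κ / (ε / κ) = κ ^ 2 / ε := by field_simp
  have hB : ((1 + (ε ^ 2 / κ ^ 2) ^ 2) / (ε / κ)) * κ = κ ^ 2 / ε + ε ^ 3 / κ ^ 2 := by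
    field_simp
  rw [hA, hB]
  have h4 : ε ^ 4 < ε ^ 3 := by nlinarith [mul_lt_mul_of_pos_right hε1 (pow_pos hε 3)]
  have h2 : 0 < κ ^ 2 - ε ^ 3 - ε ^ 4 := by nlinarith
  have h3 : 0 < κ ^ 2 - ε ^ 3 := by nlinarith
  set S : ℝ := 1 + κ ^ 2 + κ ^ 2 / ε with hSdef
  set R : ℝ := κ ^ 2 / ε + ε ^ 3 / κ ^ 2 + κ ^ 2 with hRdef
  clear_value S R
  have hεκ : 0 < κ ^ 2 / ε := by positivity
  have hRS : 0 ≤ 2 * R - S := by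
    rw [hRdef, hSdef]
    have : 0 ≤ ε ^ 3 / κ ^ 2 := by positivity
    nlinarith
  have hsq : (2 * R - S) ^ 2 < S ^ 2 - 4 * κ ^ 2 := by
    have key : κ ^ 2 < R * (S - R) := by
      rw [hRdef, hSdef]
      have hne : ε ≠ 0 := ne_of_gt hε
      have hκne : κ ≠ 0 := ne_of_gt hκ0
      rw [div_add_div _ _ hne (by positivity), ← sub_pos]
      field_simp
      nlinarith [mul_pos (pow_pos hκ0 4) h2, mul_pos (pow_pos hε 4) h3,
        mul_pos hε hκ0, pow_pos hκ0 4, pow_pos hε 4]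
    nlinarith
  have hlt : 2 * R - S < Real.sqrt (S ^ 2 - 4 * κ ^ 2) := (Real.lt_sqrt hRS).2 hsq
  linarith [hlt]
end
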